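/- arXiv:1509.06587 — 8 statements merged into one kernel-verified Lean document; each statement's English description precedes it below -/
import Mathlib

section
/- Let Π be a finite projective plane of even order n which admits an orthogonal polarity. Then Π contains a Fano subplane, i.e., there exist 7 points and 7 lines of Π which, under the incidence relation of Π restricted to them, form a projective plane of order 2. -/
/-- The incidence matrix of the Fano plane: `fanoM i j = true` iff point `i` lies on
line `j`. -/
def fanoM (i j : Fin 7) : Bool :=
  (i.val, j.val) ∈ [(0,1),(0,2),(0,4),(1,0),(1,2),(1,5),(2,0),(2,1),(2,6),
    (3,0),(3,3),(3,4),(4,1),(4,3),(4,5),(5,2),(5,3),(5,6),(6,4),(6,5),(6,6)]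




/-- A polarity of a projective plane `(P, L)` is an incidence-preserving involutive
correlation.  We encode it as an equivalence `π : P ≃ L` (points to lines; the map on lines
is then `π.symm`, so that the composite is the identity), together with the incidence
condition `∀ p q, p ∈ π q ↔ q ∈ π p` (equivalently, `p ∈ l ↔ π(l) ∈ π(p)`).
A point `p` is *absolute* when `p ∈ π p`.

`IsFanoSubplane ps ls` says the 7 points `ps` and 7 lines `ls`, with incidence inherited
from the ambient plane, form a projective plane of order 2 (a Fano subplane): any two of
the points lie on exactly one of the lines, any two of the lines meet in exactly one of the
points, each line carries exactly 3 of the points and each point lies on exactly 3 of the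
lines. -/
def IsFanoSubplane {P L : Type*} [Membership P L] (ps : Set P) (ls : Set L) : Prop :=
  ps.ncard = 7 ∧ ls.ncard = 7 ∧
  (∀ p ∈ ps, ∀ q ∈ ps, p ≠ q → ∃! l, l ∈ ls ∧ p ∈ l ∧ q ∈ l) ∧
  (∀ l ∈ ls, ∀ m ∈ ls, l ≠ m → ∃! p, p ∈ ps ∧ p ∈ l ∧ p ∈ m) ∧
  (∀ l ∈ ls, {p | p ∈ ps ∧ p ∈ l}.ncard = 3) ∧
  (∀ p ∈ ps, {l | l ∈ ls ∧ p ∈ l}.ncard = 3)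

theorem fano_model {P L : Type*} [Membership P L] (f : Fin 7 → P) (g : Fin 7 → L)
    (hf : Function.Injective f) (hg : Function.Injective g)
    (h : ∀ i j, f i ∈ g j ↔ fanoM i j = true) :
    IsFanoSubplane (Set.range f) (Set.range g) := by
  have key1 : ∀ i j : Fin 7, i ≠ j → ∃! k, fanoM i k = true ∧ fanoM j k = true := by
    simp only [ExistsUnique]; decide
  have key2 : ∀ i j : Fin 7, i ≠ j → ∃! k, fanoM k i = true ∧ fanoM k j = true := by
    simp only [ExistsUnique]; decide
  have cardP : ∀ j : Fin 7, ({i | fanoM i j = true} : Set (Fin 7)).ncard = 3 := by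
    intro j
    have : ({i | fanoM i j = true} : Set (Fin 7)) =
        ↑(Finset.univ.filter fun i => fanoM i j = true) := by ext i; simp
    rw [this, Set.ncard_coe_finset]
    clear this; revert j; decide
  have cardL : ∀ i : Fin 7, ({j | fanoM i j = true} : Set (Fin 7)).ncard = 3 := by
    intro i
    have : ({j | fanoM i j = true} : Set (Fin 7)) =
        ↑(Finset.univ.filter fun j => fanoM i j = true) := by ext j; simp
    rw [this, Set.ncard_coe_finset]
    clear this; revert i; decide
  refine ⟨?_, ?_, ?_, ?_, ?_, ?_⟩
  · rw [← Set.image_univ, Set.ncard_image_of_injective _ hf, Set.ncard_univ]; simp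
  · rw [← Set.image_univ, Set.ncard_image_of_injective _ hg, Set.ncard_univ]; simp
  · rintro p ⟨i, rfl⟩ q ⟨j, rfl⟩ hpq
    have hij : i ≠ j := fun e => hpq (by rw [e])
    obtain ⟨k, ⟨hk1, hk2⟩, hk3⟩ := key1 i j hij
    refine ⟨g k, ⟨⟨k, rfl⟩, (h i k).mpr hk1, (h j k).mpr hk2⟩, ?_⟩
    rintro l ⟨⟨k', rfl⟩, h1, h2⟩
    rw [hk3 k' ⟨(h i k').mp h1, (h j k').mp h2⟩]
  · rintro l ⟨i, rfl⟩ l' ⟨j, rfl⟩ hll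
    have hij : i ≠ j := fun e => hll (by rw [e])
    obtain ⟨k, ⟨hk1, hk2⟩, hk3⟩ := key2 i j hij
    refine ⟨f k, ⟨⟨k, rfl⟩, (h k i).mpr hk1, (h k j).mpr hk2⟩, ?_⟩
    rintro p ⟨⟨k', rfl⟩, h1, h2⟩
    rw [hk3 k' ⟨(h k' i).mp h1, (h k' j).mp h2⟩]
  · rintro l ⟨j, rfl⟩
    have : {p | p ∈ Set.range f ∧ p ∈ g j} = f '' {i | fanoM i j = true} := by
      ext p
      constructor
      · rintro ⟨⟨i, rfl⟩, hp⟩; exact ⟨i, (h i j).mp hp, rfl⟩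
      · rintro ⟨i, hi, rfl⟩; exact ⟨⟨i, rfl⟩, (h i j).mpr hi⟩
    rw [this, Set.ncard_image_of_injective _ hf, cardP j]
  · rintro p ⟨i, rfl⟩
    have : {l | l ∈ Set.range g ∧ f i ∈ l} = g '' {j | fanoM i j = true} := by
      ext l
      constructor
      · rintro ⟨⟨j, rfl⟩, hp⟩; exact ⟨j, (h i j).mp hp, rfl⟩
      · rintro ⟨j, hj, rfl⟩; exact ⟨⟨j, rfl⟩, (h i j).mpr hj⟩
    rw [this, Set.ncard_image_of_injective _ hg, cardL i]

theorem fano_model_injf {P L : Type*} [Membership P L] (f : Fin 7 → P) (g : Fin 7 → L)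
    (h : ∀ i j, f i ∈ g j ↔ fanoM i j = true) : Function.Injective f := by
  intro i j e
  by_contra ne
  have key : ∀ i j : Fin 7, i ≠ j → ∃ w, fanoM i w ≠ fanoM j w := by decide
  obtain ⟨w, hw⟩ := key i j ne
  apply hw
  have h1 := h i w
  rw [e] at h1
  exact Bool.coe_iff_coe.mp (h1.symm.trans (h j w))

theorem fano_model_injg {P L : Type*} [Membership P L] (f : Fin 7 → P) (g : Fin 7 → L)
    (h : ∀ i j, f i ∈ g j ↔ fanoM i j = true) : Function.Injective g := by
  intro i j e
  by_contra ne
  have key : ∀ i j : Fin 7, i ≠ j → ∃ w, fanoM w i ≠ fanoM w j := by decide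
  obtain ⟨w, hw⟩ := key i j ne
  apply hw
  have h1 := h w i
  rw [e] at h1
  exact Bool.coe_iff_coe.mp (h1.symm.trans (h w j))




open Configuration Configuration.ProjectivePlane in
theorem exists_absolute_line {P L : Type*} [Membership P L] [Fintype P] [Fintype L]
    [ProjectivePlane P L] (n : ℕ) (hord : order P L = n) (hn : Even n)
    (π : P ≃ L) (hπ : ∀ p q : P, p ∈ π q ↔ q ∈ π p)
    (horth : {x : P | x ∈ π x}.ncard = n + 1) :
    ∃ m : L, ∀ p : P, p ∈ π p ↔ p ∈ m := by
  classical
  have U : ∀ {p q : P} {l l' : L}, l ≠ l' → p ∈ l → p ∈ l' → q ∈ l → q ∈ l' → p = q :=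
    fun hne hp hp' hq hq' => (Nondegenerate.eq_or_eq hp hq hp' hq').resolve_right hne
  have Uline : ∀ {p q : P} {l l' : L}, p ≠ q → p ∈ l → q ∈ l → p ∈ l' → q ∈ l' → l = l' :=
    fun hne hp hq hp' hq' => (Nondegenerate.eq_or_eq hp hq hp' hq').resolve_left hne
  set S : Finset P := Finset.univ.filter (fun p => p ∈ π p) with hSdef
  have hS : S.card = n + 1 := by
    have h1 : {x : P | x ∈ π x} = ↑S := by ext x; simp [hSdef]
    rwa [h1, Set.ncard_coe_finset] at horth
  have hmemS : ∀ p : P, p ∈ S ↔ p ∈ π p := by intro p; simp [hSdef]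
  -- number of points on a line
  have hptcard : ∀ l : L, (Finset.univ.filter (· ∈ l)).card = n + 1 := by
    intro l
    have := pointCount_eq P l
    rw [hord] at this
    rw [← this, pointCount, Nat.card_eq_fintype_card, Fintype.card_subtype]
  have hlncard : ∀ p : P, (Finset.univ.filter (fun l : L => p ∈ l)).card = n + 1 := by
    intro p
    have := lineCount_eq L p
    rw [hord] at this
    rw [← this, lineCount, Nat.card_eq_fintype_card, Fintype.card_subtype]
  -- each absolute line has exactly one absolute point
  have habsL : ∀ l : L, π.symm l ∈ l → ∀ p ∈ S, p ∈ l → p = π.symm l := by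
    intro l hl p hp hpl
    have h1 : p ∈ π p := (hmemS p).mp hp
    have h2 : π.symm l ∈ π (π.symm l) := by rw [Equiv.apply_symm_apply]; exact hl
    by_contra hne
    have h3 : π.symm l ∈ π p := by
      have : p ∈ π (π.symm l) := by rw [Equiv.apply_symm_apply]; exact hpl
      exact (hπ _ _).mp this
    have h4 : p ∈ π (π.symm l) := by rw [Equiv.apply_symm_apply]; exact hpl
    have := Uline hne h1 h3 h4 h2
    exact hne (by
      have := π.injective (this : π p = π (π.symm l))
      exact this)
  -- parity: each non-absolute line has an odd number of absolute points
  have hodd : ∀ l : L, π.symm l ∉ l → Odd ((S.filter (· ∈ l)).card) := by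
    intro l hl
    have hne : ∀ q : {p : P // p ∈ l}, π q.1 ≠ l := by
      intro q h
      apply hl
      have : π.symm (π q.1) = π.symm l := by rw [h]
      rw [Equiv.symm_apply_apply] at this
      rw [← this]; exact q.2
    let σ : {p : P // p ∈ l} → {p : P // p ∈ l} :=
      fun q => ⟨HasPoints.mkPoint (hne q), (HasPoints.mkPoint_ax (hne q)).2⟩
    have hσ1 : ∀ q, (σ q).1 ∈ π q.1 := fun q => (HasPoints.mkPoint_ax (hne q)).1
    have hσinv : ∀ q, σ (σ q) = q := by
      intro q
      apply Subtype.ext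
      exact U (hne (σ q)) (hσ1 (σ q)) (σ (σ q)).2 ((hπ _ _).mpr (hσ1 q)) q.2
    have hfix : ∀ q : {p : P // p ∈ l}, σ q = q ↔ q.1 ∈ π q.1 := by
      intro q
      constructor
      · intro h
        have := hσ1 q
        rwa [h] at this
      · intro h
        apply Subtype.ext
        exact U (hne q) (hσ1 q) (σ q).2 h q.2
    let f : Function.End {p : P // p ∈ l} := σ
    have h2 : f ^ 2 ^ 1 = 1 := by
      rw [pow_one, pow_two]
      exact funext hσinv
    have hmod := Equiv.Perm.card_fixedPoints_modEq (p := 2) (n := 1) h2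
    have hcardfix : Fintype.card (Function.fixedPoints f)
        = (S.filter (· ∈ l)).card := by
      have e : Function.fixedPoints (σ : Function.End {p : P // p ∈ l})
          ≃ {p : P // p ∈ π p ∧ p ∈ l} :=
        { toFun := fun q => ⟨q.1.1, ⟨(hfix q.1).mp q.2, q.1.2⟩⟩
          invFun := fun p => ⟨⟨p.1, p.2.2⟩, (hfix _).mpr p.2.1⟩
          left_inv := fun q => by ext; rfl
          right_inv := fun p => by ext; rfl }
      rw [Fintype.card_congr e, Fintype.card_subtype]
      congr 1
      ext p
      simp [hSdef, and_comm]
    have hcardl : Fintype.card {p : P // p ∈ l} = n + 1 := by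
      rw [Fintype.card_subtype]; exact hptcard l
    rw [hcardl, hcardfix] at hmod
    have : (S.filter (· ∈ l)).card % 2 = (n + 1) % 2 := hmod.symm
    rw [Nat.odd_iff, this, Nat.odd_iff.mp (Even.add_one hn)]
  -- counting setup
  set T : L → Finset P := fun l => S.filter (· ∈ l) with hTdef
  have hTsub : ∀ l, T l ⊆ S := fun l => Finset.filter_subset _ _
  have hαle : ∀ l : L, (T l).card ≤ n + 1 := by
    intro l
    calc (T l).card ≤ (Finset.univ.filter (· ∈ l)).card :=
          Finset.card_le_card (Finset.filter_subset_filter _ (Finset.subset_univ S))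
      _ = n + 1 := hptcard l
  set A : Finset L := Finset.univ.filter (fun l => π.symm l ∈ l) with hAdef
  set B : Finset L := Finset.univ.filter (fun l => ¬ π.symm l ∈ l) with hBdef
  have hcA : A.card = n + 1 := by
    rw [← hS]
    apply Finset.card_bij' (fun l _ => π.symm l) (fun p _ => π p)
    · intro l hl
      rw [hmemS, Equiv.apply_symm_apply]
      exact (Finset.mem_filter.mp hl).2
    · intro p hp
      simp only [hAdef, Finset.mem_filter, Finset.mem_univ, true_and, Equiv.symm_apply_apply]
      exact (hmemS p).mp hp
    · intro l _; exact Equiv.apply_symm_apply π l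
    · intro p _; exact Equiv.symm_apply_apply π p
  have hTA : ∀ l ∈ A, T l = {π.symm l} := by
    intro l hl
    have hlabs : π.symm l ∈ l := (Finset.mem_filter.mp hl).2
    ext p
    simp only [hTdef, Finset.mem_filter, Finset.mem_singleton]
    constructor
    · rintro ⟨hp, hpl⟩; exact habsL l hlabs p hp hpl
    · rintro rfl
      refine ⟨?_, hlabs⟩
      rw [hmemS, Equiv.apply_symm_apply]; exact hlabs
  -- total flags
  have hflag : ∑ l : L, (T l).card = (n+1) * (n+1) := by
    have : ∀ l : L, (T l).card = ∑ p ∈ S, if p ∈ l then 1 else 0 := by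
      intro l; rw [hTdef]; exact Finset.card_filter _ _
    rw [Finset.sum_congr rfl fun l _ => this l, Finset.sum_comm]
    have : ∀ p ∈ S, (∑ l : L, if p ∈ l then 1 else 0) = n + 1 := by
      intro p _
      rw [← Finset.card_filter]
      exact hlncard p
    rw [Finset.sum_congr rfl this, Finset.sum_const, hS, smul_eq_mul]
  -- pair count
  have hpair : ∑ l : L, (T l).card * ((T l).card - 1) = (n+1) * n := by
    have h1 : ∀ l : L, (T l).card * ((T l).card - 1) = (T l).offDiag.card := by
      intro l; rw [Finset.offDiag_card, Nat.mul_sub_one, Nat.mul_comm]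
    have h2 : ∀ l : L, (T l).offDiag =
        S.offDiag.filter (fun pq => pq.1 ∈ l ∧ pq.2 ∈ l) := by
      intro l
      ext ⟨p, q⟩
      simp only [Finset.mem_offDiag, Finset.mem_filter, hTdef]
      tauto
    have h3 : ∀ pq ∈ S.offDiag,
        (Finset.univ.filter (fun l : L => pq.1 ∈ l ∧ pq.2 ∈ l)).card = 1 := by
      rintro ⟨p, q⟩ hpq
      rw [Finset.mem_offDiag] at hpq
      obtain ⟨-, -, hne⟩ := hpq
      rw [Finset.card_eq_one]
      obtain ⟨l₀, hl₀, hl₀u⟩ := HasLines.existsUnique_line (P := P) (L := L) p q hne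
      refine ⟨l₀, ?_⟩
      ext l'
      simp only [Finset.mem_filter, Finset.mem_univ, true_and, Finset.mem_singleton]
      constructor
      · intro h; exact hl₀u l' h
      · rintro rfl; exact hl₀
    calc ∑ l : L, (T l).card * ((T l).card - 1)
        = ∑ l : L, (S.offDiag.filter (fun pq => pq.1 ∈ l ∧ pq.2 ∈ l)).card := by
          refine Finset.sum_congr rfl fun l _ => ?_
          rw [h1 l, h2 l]
      _ = ∑ l : L, ∑ pq ∈ S.offDiag, if pq.1 ∈ l ∧ pq.2 ∈ l then 1 else 0 := by
          exact Finset.sum_congr rfl fun l _ => Finset.card_filter _ _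
      _ = ∑ pq ∈ S.offDiag, ∑ l : L, if pq.1 ∈ l ∧ pq.2 ∈ l then 1 else 0 :=
          Finset.sum_comm
      _ = ∑ pq ∈ S.offDiag, 1 := by
          refine Finset.sum_congr rfl fun pq hpq => ?_
          rw [← Finset.card_filter]
          exact h3 pq hpq
      _ = S.offDiag.card := by rw [Finset.sum_const, smul_eq_mul, Nat.mul_one]
      _ = (n+1) * n := by
          have h8 : (n+1)*(n+1) = n*n+n+n+1 := by ring
          have h9 : (n+1)*n = n*n+n := by ring
          rw [Finset.offDiag_card, hS]
          omega
  -- sums over A and B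
  have hsplitflag : ∑ l ∈ A, (T l).card + ∑ l ∈ B, (T l).card = (n+1)*(n+1) := by
    rw [← hflag, hAdef, hBdef]
    exact Finset.sum_filter_add_sum_filter_not _ _ _
  have hsumA : ∑ l ∈ A, (T l).card = n + 1 := by
    have : ∀ l ∈ A, (T l).card = 1 := fun l hl => by rw [hTA l hl, Finset.card_singleton]
    rw [Finset.sum_congr rfl this, Finset.sum_const, smul_eq_mul, hcA, Nat.mul_one]
  have hsumB : ∑ l ∈ B, (T l).card = n * n + n := by
    have h4 : (n+1)*(n+1) = n*n + n + (n+1) := by ring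
    omega
  have hcardL : Fintype.card L = n*n + n + 1 := by
    have := card_lines P L
    rw [hord] at this
    rw [this]; ring
  have hABcard : A.card + B.card = n * n + n + 1 := by
    rw [← hcardL, ← Finset.card_univ, hAdef, hBdef]
    exact Finset.card_filter_add_card_filter_not _
  have hcB : B.card = n * n := by omega
  have hge1 : ∀ l ∈ B, 1 ≤ (T l).card := by
    intro l hl
    exact (hodd l (by simpa [hBdef] using (Finset.mem_filter.mp hl).2)).pos
  have hsumB1 : ∑ l ∈ B, ((T l).card - 1) = n := by
    have h7 : ∑ l ∈ B, ((T l).card - 1 + 1) = ∑ l ∈ B, (T l).card :=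
      Finset.sum_congr rfl fun l hl => by have := hge1 l hl; omega
    rw [Finset.sum_add_distrib, Finset.sum_const, smul_eq_mul, Nat.mul_one] at h7
    omega
  have hpairB : ∑ l ∈ B, (T l).card * ((T l).card - 1) = (n+1) * n := by
    have hzero : ∀ l ∈ A, (T l).card * ((T l).card - 1) = 0 := by
      intro l hl
      rw [hTA l hl, Finset.card_singleton]
    have hsplit2 : ∑ l ∈ A, (T l).card * ((T l).card - 1)
        + ∑ l ∈ B, (T l).card * ((T l).card - 1) = (n+1) * n := by
      rw [← hpair, hAdef, hBdef]
      exact Finset.sum_filter_add_sum_filter_not _ _ _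
    have hA0 : ∑ l ∈ A, (T l).card * ((T l).card - 1) = 0 := Finset.sum_eq_zero hzero
    omega
  have hptwise : ∀ l ∈ B, (T l).card * ((T l).card - 1) ≤ (n+1) * ((T l).card - 1) :=
    fun l _ => Nat.mul_le_mul_right _ (hαle l)
  have hequal : ∀ l ∈ B, (T l).card * ((T l).card - 1) = (n+1) * ((T l).card - 1) := by
    have hsum2 : ∑ l ∈ B, (n+1) * ((T l).card - 1) = (n+1) * n := by
      rw [← Finset.mul_sum, hsumB1]
    exact (Finset.sum_eq_sum_iff_of_le hptwise).mp (by rw [hpairB, hsum2])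
  -- find a secant
  have hn2 : 1 < n := by have := one_lt_order P L; rwa [hord] at this
  obtain ⟨p, q, hp, hq, hpq⟩ := Finset.one_lt_card_iff.mp
    (by rw [hS]; omega : 1 < S.card)
  obtain ⟨l₀, ⟨hpl₀, hql₀⟩, -⟩ := HasLines.existsUnique_line (P := P) (L := L) p q hpq
  have hl₀B : l₀ ∈ B := by
    rw [hBdef, Finset.mem_filter]
    refine ⟨Finset.mem_univ _, fun habs => ?_⟩
    have h5 := habsL l₀ habs p hp hpl₀
    have h6 := habsL l₀ habs q hq hql₀
    exact hpq (h5.trans h6.symm)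
  have h2le : 2 ≤ (T l₀).card := by
    have : ({p, q} : Finset P) ⊆ T l₀ := by
      intro x hx
      rcases Finset.mem_insert.mp hx with rfl | hx
      · exact Finset.mem_filter.mpr ⟨hp, hpl₀⟩
      · rw [Finset.mem_singleton] at hx; subst hx
        exact Finset.mem_filter.mpr ⟨hq, hql₀⟩
    calc 2 = ({p, q} : Finset P).card := (Finset.card_pair hpq).symm
      _ ≤ (T l₀).card := Finset.card_le_card this
  have hTcard : (T l₀).card = n + 1 := by
    have heq := hequal l₀ hl₀B
    have hpos : 0 < (T l₀).card - 1 := by omega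
    exact Nat.eq_of_mul_eq_mul_right hpos heq
  -- conclude
  have hTS : T l₀ = S := Finset.eq_of_subset_of_card_le (hTsub l₀) (by rw [hTcard, hS])
  have hTall : T l₀ = Finset.univ.filter (· ∈ l₀) := by
    apply Finset.eq_of_subset_of_card_le
      (Finset.filter_subset_filter _ (Finset.subset_univ S))
    rw [hTcard, hptcard]
  refine ⟨l₀, fun r => ⟨fun h => ?_, fun h => ?_⟩⟩
  · have : r ∈ T l₀ := by rw [hTS, hmemS]; exact h
    exact (Finset.mem_filter.mp this).2
  · have : r ∈ T l₀ := by
      rw [hTall]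
      exact Finset.mem_filter.mpr ⟨Finset.mem_univ _, h⟩
    rw [hTS, hmemS] at this
    exact this



open Configuration Configuration.ProjectivePlane in
theorem fano_embedding
    {P L : Type*} [Membership P L] [Fintype P] [Fintype L]
    [Configuration.ProjectivePlane P L]
    (n : ℕ) (hord : Configuration.ProjectivePlane.order P L = n)
    (π : P ≃ L) (hπ : ∀ p q : P, p ∈ π q ↔ q ∈ π p)
    (m : L) (habs : ∀ p : P, p ∈ π p ↔ p ∈ m) :
    ∃ (f : Fin 7 → P) (g : Fin 7 → L), ∀ i j, f i ∈ g j ↔ fanoM i j = true := by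
  classical
  have hn2 : 1 < n := by have := one_lt_order P L; rwa [hord] at this
  have U : ∀ {p q : P} {l l' : L}, l ≠ l' → p ∈ l → p ∈ l' → q ∈ l → q ∈ l' → p = q :=
    fun hne hp hp' hq hq' => (Nondegenerate.eq_or_eq hp hq hp' hq').resolve_right hne
  have hptcard : ∀ l : L, (Finset.univ.filter (· ∈ l)).card = n + 1 := by
    intro l
    have := pointCount_eq P l
    rw [hord] at this
    rw [← this, pointCount, Nat.card_eq_fintype_card, Fintype.card_subtype]
  set k : P := π.symm m with hkdef
  have hπk : π k = m := π.apply_symm_apply m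
  have hkmem : ∀ p : P, k ∈ π p ↔ p ∈ m := by
    intro p; rw [hπ k p, hπk]
  -- the pole of m is not on m
  have hkm : k ∉ m := by
    intro hkm
    obtain ⟨x, y, hx, hy, hxy⟩ := Finset.one_lt_card_iff.mp
      (by rw [hptcard m]; omega : 1 < (Finset.univ.filter (· ∈ m)).card)
    have hxm : x ∈ m := (Finset.mem_filter.mp hx).2
    have hym : y ∈ m := (Finset.mem_filter.mp hy).2
    have key : ∀ p : P, p ∈ m → p = k := by
      intro p hpm
      rcases Nondegenerate.eq_or_eq ((habs p).mpr hpm) ((hkmem p).mpr hpm) hpm hkm with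
        h | h
      · exact h
      · have : π.symm (π p) = π.symm m := by rw [h]
        rwa [Equiv.symm_apply_apply] at this
    exact hxy ((key x hxm).trans (key y hym).symm)
  -- tangency: the tangent line at p ∈ m meets m only at p
  have htang : ∀ p q : P, p ∈ m → q ∈ m → q ∈ π p → q = p := by
    intro p q hpm hqm hqπp
    rcases Nondegenerate.eq_or_eq hqπp ((habs p).mpr hpm) hqm hpm with h | h
    · exact h
    · exfalso
      apply hkm
      have : π.symm (π p) = π.symm m := by rw [h]
      rw [Equiv.symm_apply_apply] at this
      rw [hkdef, ← this]
      exact hpm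
  -- choose a point a off m, different from k
  have hcardP : Fintype.card P = n*n + n + 1 := by
    have := card_points P L
    rw [hord] at this
    rw [this]; ring
  obtain ⟨a, ham, hak⟩ : ∃ a : P, a ∉ m ∧ a ≠ k := by
    by_contra hcon
    push_neg at hcon
    have hsub : (Finset.univ : Finset P) ⊆ (Finset.univ.filter (· ∈ m)) ∪ {k} := by
      intro x _
      by_cases hxm : x ∈ m
      · exact Finset.mem_union_left _ (Finset.mem_filter.mpr ⟨Finset.mem_univ _, hxm⟩)
      · exact Finset.mem_union_right _ (by rw [Finset.mem_singleton]; exact hcon x hxm)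
    have h1 := Finset.card_le_card hsub
    have h2 := Finset.card_union_le (Finset.univ.filter (· ∈ m)) ({k} : Finset P)
    rw [Finset.card_univ, hcardP] at h1
    rw [hptcard m, Finset.card_singleton] at h2
    have h3 : 2 * n ≤ n * n := Nat.mul_le_mul_right n hn2
    omega
  have haPa : a ∉ π a := fun h => ham ((habs a).mp h)
  have hπa_m : π a ≠ m := by
    intro h
    apply hak
    have : π.symm (π a) = π.symm m := by rw [h]
    rwa [Equiv.symm_apply_apply] at this
  set pa : P := Configuration.HasPoints.mkPoint hπa_m with hpadef
  have hpaPa : pa ∈ π a := (Configuration.HasPoints.mkPoint_ax hπa_m).1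
  have hpam : pa ∈ m := (Configuration.HasPoints.mkPoint_ax hπa_m).2
  have hkPa : k ∉ π a := fun h => ham ((hkmem a).mp h)
  -- choose b on π a different from pa
  obtain ⟨b, hbPa, hbpa⟩ : ∃ b : P, b ∈ π a ∧ b ≠ pa := by
    obtain ⟨x, y, hx, hy, hxy⟩ := Finset.one_lt_card_iff.mp
      (by rw [hptcard (π a)]; omega : 1 < (Finset.univ.filter (· ∈ π a)).card)
    rcases eq_or_ne x pa with rfl | hxpa
    · exact ⟨y, (Finset.mem_filter.mp hy).2, fun e => hxy e.symm⟩
    · exact ⟨x, (Finset.mem_filter.mp hx).2, hxpa⟩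
  have hbm : b ∉ m := fun h => hbpa (U hπa_m hbPa h hpaPa hpam)
  have hbPb : b ∉ π b := fun h => hbm ((habs b).mp h)
  have hbk : b ≠ k := fun e => hkPa (e ▸ hbPa)
  have haPb : a ∈ π b := (hπ a b).mpr hbPa
  have hab : a ≠ b := fun e => haPa (by rw [e]; exact (hπ b b).mp (e ▸ hbPa))
  have hπb_ne_πa : π b ≠ π a := fun h => hab (π.injective h).symm
  have hπa_ne_πb : π a ≠ π b := hπb_ne_πa.symm
  set c : P := Configuration.HasPoints.mkPoint hπb_ne_πa with hcdef
  have hcPb : c ∈ π b := (Configuration.HasPoints.mkPoint_ax hπb_ne_πa).1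
  have hcPa : c ∈ π a := (Configuration.HasPoints.mkPoint_ax hπb_ne_πa).2
  have hπb_m : π b ≠ m := by
    intro h
    apply hbk
    have : π.symm (π b) = π.symm m := by rw [h]
    rwa [Equiv.symm_apply_apply] at this
  set pb : P := Configuration.HasPoints.mkPoint hπb_m with hpbdef
  have hpbPb : pb ∈ π b := (Configuration.HasPoints.mkPoint_ax hπb_m).1
  have hpbm : pb ∈ m := (Configuration.HasPoints.mkPoint_ax hπb_m).2
  -- c is not on m
  have hpaabs : pa ∈ π pa := (habs pa).mpr hpam
  have hpa_a : pa ≠ a := fun e => ham (e ▸ hpam)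
  have hπpa_ne_πa : π pa ≠ π a := fun h => hpa_a (π.injective h)
  have hcm : c ∉ m := by
    intro h
    have hcpa : c = pa := U hπa_m hcPa h hpaPa hpam
    have hpaPb : pa ∈ π b := hcpa ▸ hcPb
    have hbTpa : b ∈ π pa := (hπ b pa).mpr hpaPb
    have : pa = b := U hπpa_ne_πa hpaabs hpaPa hbTpa hbPa
    exact hbm (this ▸ hpam)
  have hcPc : c ∉ π c := fun h => hcm ((habs c).mp h)
  have hck : c ≠ k := fun e => hkPa (e ▸ hcPa)
  have hca : c ≠ a := fun e => haPa (e ▸ hcPa)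
  have hcb : c ≠ b := fun e => hbPb (e ▸ hcPb)
  have haPc : a ∈ π c := (hπ a c).mpr hcPa
  have hbPc : b ∈ π c := (hπ b c).mpr hcPb
  have hπc_m : π c ≠ m := by
    intro h
    apply hck
    have : π.symm (π c) = π.symm m := by rw [h]
    rwa [Equiv.symm_apply_apply] at this
  set pc : P := Configuration.HasPoints.mkPoint hπc_m with hpcdef
  have hpcPc : pc ∈ π c := (Configuration.HasPoints.mkPoint_ax hπc_m).1
  have hpcm : pc ∈ m := (Configuration.HasPoints.mkPoint_ax hπc_m).2
  have hπa_ne_πc : π a ≠ π c := fun h => hca (π.injective h).symm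
  have hπb_ne_πc : π b ≠ π c := fun h => hcb (π.injective h).symm
  -- pa, pb, pc pairwise distinct
  have hpapb : pa ≠ pb := by
    intro e
    have hpaPb : pa ∈ π b := e ▸ hpbPb
    have : pa = c := U hπa_ne_πb hpaPa hpaPb hcPa hcPb
    exact hcm (this ▸ hpam)
  have hpapc : pa ≠ pc := by
    intro e
    have hpaPc : pa ∈ π c := e ▸ hpcPc
    have : pa = b := U hπa_ne_πc hpaPa hpaPc hbPa hbPc
    exact hbm (this ▸ hpam)
  have hpbpc : pb ≠ pc := by
    intro e
    have hpbPc : pb ∈ π c := e ▸ hpcPc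
    have : pb = a := U hπb_ne_πc hpbPb hpbPc haPb haPc
    exact ham (this ▸ hpbm)
  -- side lines avoid the other feet
  have hpbNPa : pb ∉ π a := fun h => hpapb (U hπa_m hpaPa hpam h hpbm)
  have hpcNPa : pc ∉ π a := fun h => hpapc (U hπa_m hpaPa hpam h hpcm)
  have hpaNPb : pa ∉ π b := fun h => hpapb.symm (U hπb_m hpbPb hpbm h hpam)
  have hpcNPb : pc ∉ π b := fun h => hpbpc (U hπb_m hpbPb hpbm h hpcm)
  have hpaNPc : pa ∉ π c := fun h => hpapc.symm (U hπc_m hpcPc hpcm h hpam)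
  have hpbNPc : pb ∉ π c := fun h => hpbpc.symm (U hπc_m hpcPc hpcm h hpbm)
  -- tangent lines
  have hpbabs : pb ∈ π pb := (habs pb).mpr hpbm
  have hpcabs : pc ∈ π pc := (habs pc).mpr hpcm
  have hkTa : k ∈ π pa := (hkmem pa).mpr hpam
  have hkTb : k ∈ π pb := (hkmem pb).mpr hpbm
  have hkTc : k ∈ π pc := (hkmem pc).mpr hpcm
  have haTa : a ∈ π pa := (hπ a pa).mpr hpaPa
  have hbTb : b ∈ π pb := (hπ b pb).mpr hpbPb
  have hcTc : c ∈ π pc := (hπ c pc).mpr hpcPc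
  have haNTb : a ∉ π pb := fun h => hpbNPa ((hπ a pb).mp h)
  have haNTc : a ∉ π pc := fun h => hpcNPa ((hπ a pc).mp h)
  have hbNTa : b ∉ π pa := fun h => hpaNPb ((hπ b pa).mp h)
  have hbNTc : b ∉ π pc := fun h => hpcNPb ((hπ b pc).mp h)
  have hcNTa : c ∉ π pa := fun h => hpaNPc ((hπ c pa).mp h)
  have hcNTb : c ∉ π pb := fun h => hpbNPc ((hπ c pb).mp h)
  have hpaNTb : pa ∉ π pb := fun h => hpapb (htang pb pa hpbm hpam h)
  have hpaNTc : pa ∉ π pc := fun h => hpapc (htang pc pa hpcm hpam h)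
  have hpbNTa : pb ∉ π pa := fun h => hpapb.symm (htang pa pb hpam hpbm h)
  have hpbNTc : pb ∉ π pc := fun h => hpbpc (htang pc pb hpcm hpbm h)
  have hpcNTa : pc ∉ π pa := fun h => hpapc.symm (htang pa pc hpam hpcm h)
  have hpcNTb : pc ∉ π pb := fun h => hpbpc.symm (htang pb pc hpbm hpcm h)
  have hkNPa : k ∉ π a := hkPa
  have hkNPb : k ∉ π b := fun h => hbm ((hkmem b).mp h)
  have hkNPc : k ∉ π c := fun h => hcm ((hkmem c).mp h)
  refine ⟨![a, b, c, pa, pb, pc, k], ![π a, π b, π c, m, π pa, π pb, π pc], ?_⟩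
  intro i j
  fin_cases i <;> fin_cases j <;> simp [fanoM, -Prod.mk_zero_zero, -Prod.mk_one_one] <;> assumption


/-- A finite projective plane of even order `n` admitting an orthogonal
polarity (a polarity with exactly `n + 1` absolute points) contains a Fano subplane. -/
theorem fano_subplane_of_even_order_orthogonal_polarity
    {P L : Type*} [Membership P L] [Fintype P] [Fintype L]
    [Configuration.ProjectivePlane P L]
    (n : ℕ) (hord : Configuration.ProjectivePlane.order P L = n) (hn : Even n)
    (π : P ≃ L) (hπ : ∀ p q : P, p ∈ π q ↔ q ∈ π p)
    (horth : {x : P | x ∈ π x}.ncard = n + 1) :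
    ∃ (ps : Set P) (ls : Set L), IsFanoSubplane ps ls := by
  obtain ⟨m, habs⟩ := exists_absolute_line n hord hn π hπ horth
  obtain ⟨f, g, hinc⟩ := fano_embedding n hord π hπ m habs
  exact ⟨Set.range f, Set.range g,
    fano_model f g (fano_model_injf f g hinc) (fano_model_injg f g hinc) hinc⟩
end

section
/- Let Π be a finite projective plane with a polarity π, and let G°_π denote the polarity graph with loops. Suppose v₁, …, v₇ are seven distinct points of Π such that the subgraph of G°_π induced on them (including loops) is isomorphic to ER°₂, the polarity graph with loops of PG(2,2) under its orthogonal polarity. Then the seven points v₁, …, v₇ together with the seven lines π(v₁), …, π(v₇), with incidence inherited from Π, form a projective plane of order 2; in particular Π contains a Fano subplane. -/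
private abbrev T' := {x : Fin 3 → ZMod 2 // x ≠ 0}

private lemma cardT' : Nat.card T' = 7 := by
  rw [Nat.card_eq_fintype_card]; decide

private lemma er2_uniq (a b : T') (hab : a ≠ b) :
    ∃! c : T', dotProduct a.1 c.1 = 0 ∧ dotProduct b.1 c.1 = 0 := by
  simp only [ExistsUnique]
  revert hab; revert a b; decide

private lemma er2_card3 (a : T') :
    ({c : T' | dotProduct c.1 a.1 = 0} : Set T').ncard = 3 := by
  rw [Set.ncard_eq_toFinset_card']
  revert a; decide

private lemma er2_card3' (a : T') :
    ({c : T' | dotProduct a.1 c.1 = 0} : Set T').ncard = 3 := by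
  have : ({c : T' | dotProduct a.1 c.1 = 0} : Set T')
      = {c : T' | dotProduct c.1 a.1 = 0} := by
    ext c; simp [dotProduct_comm]
  rw [this]; exact er2_card3 a

/-- `ER°₂`, the polarity graph with loops of `PG(2, 2)` under its orthogonal
polarity, has as vertices the 7 nonzero vectors of `(𝔽₂)³` with `x` adjacent to `y` iff
`x ⬝ᵥ y = 0` (loops at the absolute points).  If seven distinct points `v x` of a finite
projective plane with a polarity `π` induce (with loops) a copy of `ER°₂` in the polarity
graph, then these seven points together with the seven lines `π (v x)` form a Fano
subplane. -/
theorem fano_subplane_of_er2_subgraph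
    {P L : Type*} [Membership P L] [Fintype P] [Fintype L]
    [Configuration.ProjectivePlane P L]
    (π : P ≃ L) (hπ : ∀ p q : P, p ∈ π q ↔ q ∈ π p)
    (v : {x : Fin 3 → ZMod 2 // x ≠ 0} → P) (hv : Function.Injective v)
    (hiso : ∀ x y : {x : Fin 3 → ZMod 2 // x ≠ 0},
      v x ∈ π (v y) ↔ dotProduct x.1 y.1 = 0) :
    IsFanoSubplane (Set.range v) (Set.range fun x => π (v x)) := by
  have hv' : Function.Injective (fun x => π (v x)) := fun a b h => hv (π.injective h)
  refine ⟨?_, ?_, ?_, ?_, ?_, ?_⟩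
  · rw [← Set.image_univ, Set.ncard_image_of_injective _ hv, Set.ncard_univ, cardT']
  · rw [← Set.image_univ, Set.ncard_image_of_injective _ hv', Set.ncard_univ, cardT']
  · rintro _ ⟨a, rfl⟩ _ ⟨b, rfl⟩ hpq
    have hab : a ≠ b := fun h => hpq (congrArg v h)
    obtain ⟨c, ⟨h1, h2⟩, hu⟩ := er2_uniq a b hab
    refine ⟨π (v c), ⟨⟨c, rfl⟩, (hiso a c).2 h1, (hiso b c).2 h2⟩, ?_⟩
    rintro l ⟨⟨d, rfl⟩, h3, h4⟩
    exact congrArg (fun x => π (v x)) (hu d ⟨(hiso a d).1 h3, (hiso b d).1 h4⟩)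
  · rintro _ ⟨a, rfl⟩ _ ⟨b, rfl⟩ hlm
    have hab : a ≠ b := fun h => hlm (congrArg (fun x => π (v x)) h)
    obtain ⟨c, ⟨h1, h2⟩, hu⟩ := er2_uniq a b hab
    rw [dotProduct_comm] at h1 h2
    refine ⟨v c, ⟨⟨c, rfl⟩, (hiso c a).2 h1, (hiso c b).2 h2⟩, ?_⟩
    rintro p ⟨⟨d, rfl⟩, h3, h4⟩
    refine congrArg v (hu d ⟨?_, ?_⟩)
    · rw [dotProduct_comm]; exact (hiso d a).1 h3
    · rw [dotProduct_comm]; exact (hiso d b).1 h4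
  · rintro _ ⟨a, rfl⟩
    have : {p | p ∈ Set.range v ∧ p ∈ π (v a)}
        = v '' {c : T' | dotProduct c.1 a.1 = 0} := by
      ext p
      constructor
      · rintro ⟨⟨c, rfl⟩, hm⟩; exact ⟨c, (hiso c a).1 hm, rfl⟩
      · rintro ⟨c, hc, rfl⟩; exact ⟨⟨c, rfl⟩, (hiso c a).2 hc⟩
    rw [this, Set.ncard_image_of_injective _ hv, er2_card3]
  · rintro _ ⟨a, rfl⟩
    have : {l | l ∈ Set.range (fun x => π (v x)) ∧ v a ∈ l}
        = (fun x => π (v x)) '' {c : T' | dotProduct a.1 c.1 = 0} := by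
      ext l
      constructor
      · rintro ⟨⟨c, rfl⟩, hm⟩; exact ⟨c, (hiso a c).1 hm, rfl⟩
      · rintro ⟨c, hc, rfl⟩; exact ⟨⟨c, rfl⟩, (hiso a c).2 hc⟩
    rw [this, Set.ncard_image_of_injective _ hv', er2_card3']
end

section
/- Let Π be a finite projective plane of order n with an orthogonal polarity π, and let G_π be the polarity graph with loops removed. Then G_π contains at least (n³ - n)/6 triangles. -/
set_option maxHeartbeats 1600000 in
/-- The loopless polarity graph of a finite projective plane of order `n`
with an orthogonal polarity (exactly `n + 1` absolute points) contains at least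
`(n³ - n) / 6` triangles (unordered triples of mutually adjacent vertices). -/
theorem polarityGraph_triangle_lower_bound
    {P L : Type*} [Membership P L] [Fintype P] [Fintype L]
    [Configuration.ProjectivePlane P L]
    (n : ℕ) (hord : Configuration.ProjectivePlane.order P L = n)
    (π : P ≃ L) (hπ : ∀ p q : P, p ∈ π q ↔ q ∈ π p)
    (horth : {x : P | x ∈ π x}.ncard = n + 1) :
    (n ^ 3 - n) / 6 ≤
      {s : Set P | ∃ u v w : P, u ≠ v ∧ u ≠ w ∧ v ≠ w ∧ s = {u, v, w} ∧
        u ∈ π v ∧ v ∈ π w ∧ w ∈ π u}.ncard := by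
  classical
  set S : Set (Set P) := {s : Set P | ∃ u v w : P, u ≠ v ∧ u ≠ w ∧ v ≠ w ∧ s = {u, v, w} ∧
        u ∈ π v ∧ v ∈ π w ∧ w ∈ π u} with hS
  -- the set of ordered triangles
  set T : Finset (P × P × P) := Finset.univ.filter
    (fun t => t.1 ≠ t.2.1 ∧ t.1 ≠ t.2.2 ∧ t.2.1 ≠ t.2.2 ∧
      t.1 ∈ π t.2.1 ∧ t.2.1 ∈ π t.2.2 ∧ t.2.2 ∈ π t.1) with hT
  -- points on a line
  have hline : ∀ l : L, (Finset.univ.filter fun w : P => w ∈ l).card = n + 1 := by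
    intro l
    have h := Configuration.ProjectivePlane.pointCount_eq P l
    rw [hord] at h
    rw [← h, Configuration.pointCount, Nat.card_eq_fintype_card, Fintype.card_subtype]
  -- number of absolute points
  have habs : (Finset.univ.filter fun u : P => u ∈ π u).card = n + 1 := by
    rw [← horth, Set.ncard_eq_toFinset_card', Set.toFinset_setOf]
  have hnon : (Finset.univ.filter fun u : P => ¬ u ∈ π u).card = n ^ 2 := by
    have h := Finset.card_filter_add_card_filter_not
      (s := (Finset.univ : Finset P)) (p := fun u : P => u ∈ π u)
    rw [habs, Finset.card_univ, Configuration.ProjectivePlane.card_points P L, hord] at h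
    linarith
  -- neighbours of a point
  have hA : ∀ u : P, (Finset.univ.filter fun w : P => w ≠ u ∧ w ∈ π u).card
      = n + 1 - (if u ∈ π u then 1 else 0) := by
    intro u
    have hsplit : (Finset.univ.filter fun w : P => w ≠ u ∧ w ∈ π u).card
        + (Finset.univ.filter fun w : P => w = u ∧ w ∈ π u).card
        = (Finset.univ.filter fun w : P => w ∈ π u).card := by
      rw [← Finset.card_union_of_disjoint]
      · congr 1
        ext w
        by_cases hw : w = u <;> simp [hw]
      · simp only [Finset.disjoint_left, Finset.mem_filter]
        rintro w ⟨-, hw, -⟩ ⟨-, hw', -⟩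
        exact hw hw'
    have hu : (Finset.univ.filter fun w : P => w = u ∧ w ∈ π u).card
        = if u ∈ π u then 1 else 0 := by
      split_ifs with h
      · rw [Finset.card_eq_one]
        refine ⟨u, ?_⟩
        ext w
        simp +contextual [h]
      · rw [Finset.card_eq_zero, Finset.filter_eq_empty_iff]
        rintro w - ⟨rfl, hw⟩
        exact h hw
    rw [hline (π u)] at hsplit
    omega
  have hAbs : ∀ u : P, u ∈ π u →
      (Finset.univ.filter fun w : P => w ≠ u ∧ w ∈ π u).card = n := by
    intro u h
    have h2 := hA u
    rw [if_pos h] at h2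
    omega
  have hNon : ∀ u : P, u ∉ π u →
      (Finset.univ.filter fun w : P => w ≠ u ∧ w ∈ π u).card = n + 1 := by
    intro u h
    have h2 := hA u
    rw [if_neg h] at h2
    omega
  -- the edge sets
  set E : Finset (P × P) := Finset.univ.filter
    (fun e => e.2 ≠ e.1 ∧ e.2 ∈ π e.1) with hE
  set Ea : Finset (P × P) := Finset.univ.filter
    (fun e => e.2 ≠ e.1 ∧ e.2 ∈ π e.1 ∧ e.1 ∈ π e.1) with hEa
  set Eb : Finset (P × P) := Finset.univ.filter
    (fun e => e.2 ≠ e.1 ∧ e.2 ∈ π e.1 ∧ e.2 ∈ π e.2) with hEb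
  set E0 : Finset (P × P) := Finset.univ.filter
    (fun e => e.2 ≠ e.1 ∧ e.2 ∈ π e.1 ∧ e.1 ∉ π e.1 ∧ e.2 ∉ π e.2) with hE0
  -- counting pairs fiberwise
  have hcount : ∀ (p : P × P → Prop) (_ : DecidablePred p),
      (Finset.univ.filter p).card = ∑ a : P, (Finset.univ.filter fun b => p (a, b)).card := by
    intro p _
    rw [Finset.card_filter, Fintype.sum_prod_type]
    exact Finset.sum_congr rfl fun a _ => (Finset.card_filter _ _).symm
  -- |E| = (n+1) * n + n^2 * (n+1)
  have hEcard : E.card = (n + 1) * n + n ^ 2 * (n + 1) := by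
    rw [hE, hcount]
    trans ∑ a : P, (if a ∈ π a then n else n + 1)
    · refine Finset.sum_congr rfl fun u _ => ?_
      show (Finset.univ.filter fun b : P => b ≠ u ∧ b ∈ π u).card = _
      by_cases h : u ∈ π u
      · rw [if_pos h]; exact hAbs u h
      · rw [if_neg h]; exact hNon u h
    · rw [Finset.sum_ite, Finset.sum_const, Finset.sum_const, habs, hnon,
        smul_eq_mul, smul_eq_mul]
  -- |Ea| = (n+1) * n
  have hEaCard : Ea.card = (n + 1) * n := by
    rw [hEa, hcount]
    trans ∑ a : P, (if a ∈ π a then n else 0)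
    · refine Finset.sum_congr rfl fun u _ => ?_
      show (Finset.univ.filter fun b : P => b ≠ u ∧ b ∈ π u ∧ u ∈ π u).card = _
      by_cases h : u ∈ π u
      · rw [if_pos h, ← hAbs u h]
        congr 1
        ext b
        simp +contextual [h]
      · rw [if_neg h, Finset.card_eq_zero, Finset.filter_eq_empty_iff]
        rintro b - ⟨-, -, hb⟩
        exact h hb
    · rw [Finset.sum_ite, Finset.sum_const, Finset.sum_const, habs,
        smul_eq_mul, smul_eq_mul, mul_zero, add_zero]
  -- |Eb| = |Ea| by swapping
  have hEbCard : Eb.card = (n + 1) * n := by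
    rw [← hEaCard]
    apply Finset.card_bij (fun e _ => Prod.swap e)
    · rintro ⟨a, b⟩ he
      simp only [hEa, hEb, Finset.mem_filter, Finset.mem_univ, true_and,
        Prod.swap_prod_mk] at he ⊢
      exact ⟨fun h => he.1 h.symm, (hπ a b).mpr he.2.1, he.2.2⟩
    · exact fun a _ b _ h => Prod.swap_injective h
    · rintro ⟨a, b⟩ he
      refine ⟨(b, a), ?_, rfl⟩
      simp only [hEa, hEb, Finset.mem_filter, Finset.mem_univ, true_and] at he ⊢
      exact ⟨fun h => he.1 h.symm, (hπ a b).mpr he.2.1, he.2.2⟩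
  -- E is covered by E0, Ea, Eb
  have hcover : E.card ≤ E0.card + Ea.card + Eb.card := by
    have hsub : E ⊆ E0 ∪ Ea ∪ Eb := by
      rintro ⟨a, b⟩ he
      simp only [hE, hE0, hEa, hEb, Finset.mem_filter, Finset.mem_union,
        Finset.mem_univ, true_and] at he ⊢
      by_cases h1 : a ∈ π a
      · exact Or.inl (Or.inr ⟨he.1, he.2, h1⟩)
      · by_cases h2 : b ∈ π b
        · exact Or.inr ⟨he.1, he.2, h2⟩
        · exact Or.inl (Or.inl ⟨he.1, he.2, h1, h2⟩)
    calc E.card ≤ (E0 ∪ Ea ∪ Eb).card := Finset.card_le_card hsub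
      _ ≤ (E0 ∪ Ea).card + Eb.card := Finset.card_union_le _ _
      _ ≤ E0.card + Ea.card + Eb.card := Nat.add_le_add_right (Finset.card_union_le _ _) _
  -- lower bound for E0
  have hE0card : n ^ 3 - n ≤ E0.card := by
    rw [Nat.sub_le_iff_le_add]
    have e1 : (n + 1) * n + n ^ 2 * (n + 1) = n ^ 3 + 2 * n ^ 2 + n := by ring
    have e2 : (n + 1) * n = n ^ 2 + n := by ring
    rw [hEcard, hEaCard, hEbCard] at hcover
    linarith
  -- every edge in E0 extends to a triangle: injection E0 → T
  have hTcard : n ^ 3 - n ≤ T.card := by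
    refine le_trans hE0card (Finset.card_le_card_of_injOn
      (fun e => (e.1, (if h : e.1 ≠ e.2 then
        π.symm (Configuration.HasLines.mkLine (L := L) h) else e.1), e.2)) ?_ ?_)
    · rintro ⟨u, w⟩ he
      simp only [hE0, Finset.mem_coe, Finset.mem_filter, Finset.mem_univ, true_and] at he
      obtain ⟨hwu, hwπu, hu, hw⟩ := he
      have huw : u ≠ w := fun h => hwu h.symm
      show (u, (if h : u ≠ w then
        π.symm (Configuration.HasLines.mkLine (L := L) h) else u), w) ∈ T
      rw [dif_pos huw]
      obtain ⟨v, hv⟩ : ∃ v : P, π.symm (Configuration.HasLines.mkLine (L := L) huw) = v :=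
        ⟨_, rfl⟩
      rw [hv]
      have hπv : (π v : L) = Configuration.HasLines.mkLine huw := by
        rw [← hv]; exact Equiv.apply_symm_apply π _
      have hul : u ∈ π v := by rw [hπv]; exact (Configuration.HasLines.mkLine_ax huw).1
      have hwl : w ∈ π v := by rw [hπv]; exact (Configuration.HasLines.mkLine_ax huw).2
      simp only [hT, Finset.mem_filter, Finset.mem_univ, true_and]
      refine ⟨?_, huw, ?_, hul, (hπ v w).mpr hwl, hwπu⟩
      · intro h
        rw [← h] at hul
        exact hu hul
      · intro h
        rw [h] at hwl
        exact hw hwl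
    · rintro ⟨a, b⟩ - ⟨c, d⟩ - h
      have h1 : a = c := congrArg (fun t => t.1) h
      have h2 : b = d := congrArg (fun t => t.2.2) h
      simp [h1, h2]
  -- the map from ordered triangles to triangle sets
  set f3 : P × P × P → Set P := fun t => {t.1, t.2.1, t.2.2} with hf3
  have himg : T.card ≤ 6 * (T.image f3).card := by
    refine Finset.card_le_mul_card_image T 6 ?_
    intro b hb
    obtain ⟨⟨u, v, w⟩, htuvw, rfl⟩ := Finset.mem_image.mp hb
    simp only [hT, Finset.mem_filter, Finset.mem_univ, true_and] at htuvw
    obtain ⟨huv, huw, hvw, -, -, -⟩ := htuvw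
    have hsub : T.filter (fun x => f3 x = f3 (u, v, w)) ⊆
        ({(u,v,w), (u,w,v), (v,u,w), (v,w,u), (w,u,v), (w,v,u)} : Finset (P × P × P)) := by
      rintro ⟨p, q, r⟩ hx
      simp only [Finset.mem_filter, hT, Finset.mem_univ, true_and] at hx
      obtain ⟨⟨hpq, hpr, hqr, -, -, -⟩, hset⟩ := hx
      simp only [hf3] at hset
      have hp : p = u ∨ p = v ∨ p = w := by
        have hm : p ∈ ({u, v, w} : Set P) := by
          rw [← hset]; exact Set.mem_insert _ _
        simpa using hm
      have hq : q = u ∨ q = v ∨ q = w := by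
        have hm : q ∈ ({u, v, w} : Set P) := by
          rw [← hset]; exact Set.mem_insert_of_mem _ (Set.mem_insert _ _)
        simpa using hm
      have hr : r = u ∨ r = v ∨ r = w := by
        have hm : r ∈ ({u, v, w} : Set P) := by
          rw [← hset]
          exact Set.mem_insert_of_mem _ (Set.mem_insert_of_mem _ rfl)
        simpa using hm
      clear * - hpq hpr hqr hp hq hr huv huw hvw
      simp only [Finset.mem_insert, Finset.mem_singleton, Prod.mk.injEq]
      rcases hp with rfl | rfl | rfl <;> rcases hq with rfl | rfl | rfl <;>
        rcases hr with rfl | rfl | rfl <;> tauto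
    refine (Finset.card_le_card hsub).trans ?_
    refine (Finset.card_insert_le _ _).trans (Nat.succ_le_succ ?_)
    refine (Finset.card_insert_le _ _).trans (Nat.succ_le_succ ?_)
    refine (Finset.card_insert_le _ _).trans (Nat.succ_le_succ ?_)
    refine (Finset.card_insert_le _ _).trans (Nat.succ_le_succ ?_)
    refine (Finset.card_insert_le _ _).trans (Nat.succ_le_succ ?_)
    exact le_of_eq (Finset.card_singleton _)
  -- the image lands in S
  have hsubS : ((T.image f3 : Finset (Set P)) : Set (Set P)) ⊆ S := by
    intro s hs
    obtain ⟨⟨u, v, w⟩, ht, rfl⟩ := Finset.mem_image.mp (Finset.mem_coe.mp hs)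
    simp only [hT, Finset.mem_filter, Finset.mem_univ, true_and] at ht
    exact ⟨u, v, w, ht.1, ht.2.1, ht.2.2.1, rfl, ht.2.2.2⟩
  have hScard : (T.image f3).card ≤ S.ncard := by
    rw [← Set.ncard_coe_finset]
    exact Set.ncard_le_ncard hsubS (Set.toFinite S)
  have hfinal : n ^ 3 - n ≤ 6 * S.ncard :=
    le_trans hTcard (le_trans himg (Nat.mul_le_mul_left 6 hScard))
  calc (n ^ 3 - n) / 6 ≤ 6 * S.ncard / 6 := Nat.div_le_div_right hfinal
    _ = S.ncard := Nat.mul_div_cancel_left _ (by norm_num)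
end

section
/- Let Π be a finite projective plane of even order n with an orthogonal polarity π whose n+1 absolute points all lie on a common line l, and let p = π(l). Then in the polarity graph with loops removed, no triangle contains the vertex p; that is, p has no two neighbors that are adjacent to each other. -/
/-- Let `Π` be a finite projective plane of even order `n` with an
orthogonal polarity `π` whose `n + 1` absolute points all lie on a common line `l`, and let
`p` be the pole of `l` (`π p = l`).  Then no triangle of the loopless polarity graph
contains `p`: no two distinct neighbors of `p` are adjacent to each other. -/
theorem no_triangle_through_pole
    {P L : Type*} [Membership P L] [Fintype P] [Fintype L]
    [Configuration.ProjectivePlane P L]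
    (n : ℕ) (hord : Configuration.ProjectivePlane.order P L = n) (hn : Even n)
    (π : P ≃ L) (hπ : ∀ p q : P, p ∈ π q ↔ q ∈ π p)
    (horth : {x : P | x ∈ π x}.ncard = n + 1)
    (l : L) (habs : ∀ x : P, x ∈ π x → x ∈ l)
    (p : P) (hp : π p = l) :
    ∀ x y : P, x ≠ p → y ≠ p → x ≠ y → x ∈ π p → y ∈ π p → x ∉ π y := by
  intro x y hxp hyp hxy hx hy hmem
  -- points of l are exactly the absolute points
  have hcard : {x : P | x ∈ l}.ncard = n + 1 := by
    have := Configuration.ProjectivePlane.pointCount_eq P l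
    rw [hord] at this
    rw [← Nat.card_coe_set_eq]; exact this
  have hset : {x : P | x ∈ π x} = {x : P | x ∈ l} :=
    Set.eq_of_subset_of_ncard_le (fun a ha => habs a ha)
      (by rw [horth, hcard]) (Set.toFinite _)
  have habs' : ∀ a : P, a ∈ l → a ∈ π a := fun a ha => (hset ▸ ha : a ∈ {x : P | x ∈ π x})
  rw [hp] at hx hy
  have hxx : x ∈ π x := habs' x hx
  have hyx : y ∈ π x := (hπ x y).mp hmem
  rcases Configuration.Nondegenerate.eq_or_eq hx hy hxx hyx with h | h
  · exact hxy h
  · exact hxp (π.injective (by rw [hp, ← h]))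
end

section
/- Let Π be a finite projective plane of order n with a polarity π, and let a be an absolute point of π. Then in the polarity graph with loops removed, the number of triangles containing the vertex a is at most ⌊(n-1)/2⌋. -/
/-- In the loopless polarity graph of a finite projective plane of order
`n` with a polarity `π`, the number of triangles containing a given absolute point `a` is
at most `⌊(n - 1) / 2⌋`. -/
theorem triangles_through_absolute_point_le
    {P L : Type*} [Membership P L] [Fintype P] [Fintype L]
    [Configuration.ProjectivePlane P L]
    (n : ℕ) (hord : Configuration.ProjectivePlane.order P L = n)
    (π : P ≃ L) (hπ : ∀ p q : P, p ∈ π q ↔ q ∈ π p)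
    (a : P) (ha : a ∈ π a) :
    {s : Set P | ∃ u v : P, a ≠ u ∧ a ≠ v ∧ u ≠ v ∧ s = {a, u, v} ∧
      a ∈ π u ∧ u ∈ π v ∧ v ∈ π a}.ncard ≤ (n - 1) / 2 := by
  have hempty : {s : Set P | ∃ u v : P, a ≠ u ∧ a ≠ v ∧ u ≠ v ∧ s = {a, u, v} ∧
      a ∈ π u ∧ u ∈ π v ∧ v ∈ π a} = ∅ := by
    ext s
    simp only [Set.mem_setOf_eq, Set.mem_empty_iff_false, iff_false]
    rintro ⟨u, v, hau, hav, huv, -, h1, h2, h3⟩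
    have hu : u ∈ π a := (hπ a u).mp h1
    have hav' : a ∈ π v := (hπ a v).mpr h3
    rcases Configuration.Nondegenerate.eq_or_eq ha hu hav' h2 with h | h
    · exact hau h
    · exact hav (π.injective h)
  rw [hempty]
  simp
end

section
/- Let Π be a finite projective plane of even order n with an orthogonal polarity π whose n+1 absolute points a₁, …, a_{n+1} all lie on a common line, and let Nᵢ be the set of points on π(aᵢ) other than aᵢ. Then the polarity graph with loops removed contains at least (n³ - n)/6 - (n+1)(n/2 - 1) triangles {vᵢ, vⱼ, v_k} with vᵢ ∈ Nᵢ, vⱼ ∈ Nⱼ, v_k ∈ N_k for three distinct indices i, j, k. -/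
lemma triple_perm_six {α : Type*} {t1 t2 t3 x y z : α}
    (hset : ({t1, t2, t3} : Set α) = {x, y, z})
    (h12 : t1 ≠ t2) (h13 : t1 ≠ t3) (h23 : t2 ≠ t3) :
    (t1 = x ∧ t2 = y ∧ t3 = z) ∨ (t1 = x ∧ t2 = z ∧ t3 = y) ∨
    (t1 = y ∧ t2 = x ∧ t3 = z) ∨ (t1 = y ∧ t2 = z ∧ t3 = x) ∨
    (t1 = z ∧ t2 = x ∧ t3 = y) ∨ (t1 = z ∧ t2 = y ∧ t3 = x) := by
  have m1 : t1 = x ∨ t1 = y ∨ t1 = z := by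
    have h : t1 ∈ ({x, y, z} : Set α) := by rw [← hset]; simp
    simpa using h
  have m2 : t2 = x ∨ t2 = y ∨ t2 = z := by
    have h : t2 ∈ ({x, y, z} : Set α) := by rw [← hset]; simp
    simpa using h
  have m3 : t3 = x ∨ t3 = y ∨ t3 = z := by
    have h : t3 ∈ ({x, y, z} : Set α) := by rw [← hset]; simp
    simpa using h
  rcases m1 with rfl | rfl | rfl <;> rcases m2 with h2 | h2 | h2 <;>
      rcases m3 with h3 | h3 | h3 <;> subst_vars <;> simp_all


set_option maxHeartbeats 1000000

/-- Let `Π` be a finite projective plane of even order `n` with an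
orthogonal polarity `π` whose `n + 1` absolute points `a i` all lie on a common line, and
let `Nᵢ = {q | q ∈ π (a i) ∧ q ≠ a i}`.  Then the loopless polarity graph contains at least
`(n³ - n)/6 - (n + 1)(n/2 - 1)` triangles `{vᵢ, vⱼ, v_k}` with `vᵢ ∈ Nᵢ`, `vⱼ ∈ Nⱼ`,
`v_k ∈ N_k` for three distinct indices `i, j, k`. -/
theorem tripartite_triangle_lower_bound
    {P L : Type*} [Membership P L] [Fintype P] [Fintype L]
    [Configuration.ProjectivePlane P L]
    (n : ℕ) (hord : Configuration.ProjectivePlane.order P L = n) (hn : Even n)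
    (π : P ≃ L) (hπ : ∀ p q : P, p ∈ π q ↔ q ∈ π p)
    (a : Fin (n + 1) → P) (ha_inj : Function.Injective a)
    (ha_abs : ∀ i, a i ∈ π (a i))
    (ha_all : ∀ x : P, x ∈ π x → ∃ i, x = a i)
    (l : L) (hl : ∀ i, a i ∈ l) :
    ((n : ℤ) ^ 3 - n) / 6 - (n + 1) * ((n : ℤ) / 2 - 1) ≤
      ({s : Set P | ∃ (i j k : Fin (n + 1)) (vi vj vk : P),
        i ≠ j ∧ i ≠ k ∧ j ≠ k ∧ vi ≠ vj ∧ vi ≠ vk ∧ vj ≠ vk ∧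
        (vi ∈ π (a i) ∧ vi ≠ a i) ∧ (vj ∈ π (a j) ∧ vj ≠ a j) ∧
        (vk ∈ π (a k) ∧ vk ≠ a k) ∧
        s = {vi, vj, vk} ∧ vi ∈ π vj ∧ vj ∈ π vk ∧ vk ∈ π vi}.ncard : ℤ) := by
  classical
  set Tset : Set (Set P) :=
      {s : Set P | ∃ (i j k : Fin (n + 1)) (vi vj vk : P),
        i ≠ j ∧ i ≠ k ∧ j ≠ k ∧ vi ≠ vj ∧ vi ≠ vk ∧ vj ≠ vk ∧
        (vi ∈ π (a i) ∧ vi ≠ a i) ∧ (vj ∈ π (a j) ∧ vj ≠ a j) ∧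
        (vk ∈ π (a k) ∧ vk ≠ a k) ∧
        s = {vi, vj, vk} ∧ vi ∈ π vj ∧ vj ∈ π vk ∧ vk ∈ π vi} with hTset
  have hn2 : 2 ≤ n := by
    have h := Configuration.ProjectivePlane.one_lt_order P L
    omega
  -- the finset of absolute points
  set A : Finset P := Finset.univ.filter (fun x => x ∈ π x) with hA_def
  have hmemA : ∀ x : P, x ∈ A ↔ x ∈ π x := by intro x; simp [hA_def]
  have hA_image : A = Finset.image a Finset.univ := by
    ext x
    simp only [hmemA, Finset.mem_image, Finset.mem_univ, true_and]
    constructor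
    · intro h; obtain ⟨i, hi⟩ := ha_all x h; exact ⟨i, hi.symm⟩
    · rintro ⟨i, rfl⟩; exact ha_abs i
  have hA_card : A.card = n + 1 := by
    rw [hA_image, Finset.card_image_of_injective _ ha_inj, Finset.card_univ,
      Fintype.card_fin]
  -- points on a line, as a finset
  have hLf_card : ∀ m : L, (Finset.univ.filter (fun x : P => x ∈ m)).card = n + 1 := by
    intro m
    have h := Configuration.ProjectivePlane.pointCount_eq P m
    rw [hord] at h
    rw [← h, Configuration.pointCount, Nat.card_eq_fintype_card, Fintype.card_subtype]
  -- the absolute points are exactly the points of l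
  have hal : A = Finset.univ.filter (fun x : P => x ∈ l) := by
    apply Finset.eq_of_subset_of_card_le
    · intro x hx
      rw [hA_image] at hx
      obtain ⟨i, -, rfl⟩ := Finset.mem_image.mp hx
      simp [hl i]
    · rw [hA_card, hLf_card]
  -- unique intersection point / unique joining line
  have huniq_pt : ∀ m₁ m₂ : L, m₁ ≠ m₂ → ∃! z : P, z ∈ m₁ ∧ z ∈ m₂ :=
    fun m₁ m₂ h => Configuration.HasPoints.existsUnique_point P L m₁ m₂ h
  have huniq_ln : ∀ p₁ p₂ : P, p₁ ≠ p₂ → ∃! m : L, p₁ ∈ m ∧ p₂ ∈ m :=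
    fun p₁ p₂ h => Configuration.HasLines.existsUnique_line P L p₁ p₂ h
  have hinter : ∀ m₁ m₂ : L, m₁ ≠ m₂ →
      (Finset.univ.filter (fun x : P => x ∈ m₁ ∧ x ∈ m₂)).card = 1 := by
    intro m₁ m₂ h
    obtain ⟨z, hz, hzu⟩ := huniq_pt m₁ m₂ h
    rw [Finset.card_eq_one]
    refine ⟨z, ?_⟩
    ext w
    simp only [Finset.mem_filter, Finset.mem_univ, true_and, Finset.mem_singleton]
    exact ⟨fun hw => hzu w hw, fun hw => hw ▸ hz⟩
  -- number of non-absolute points on a line other than l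
  have hNbr : ∀ x : P, π x ≠ l →
      ((Finset.univ.filter (fun y : P => y ∈ π x)) \ A).card = n := by
    intro x hx
    have h1 : (Finset.univ.filter (fun y : P => y ∈ π x)) ∩ A
        = Finset.univ.filter (fun y : P => y ∈ π x ∧ y ∈ l) := by
      rw [hal]; ext y; simp [Finset.mem_inter, and_assoc]
    have h2 := Finset.card_sdiff_add_card_inter
      (Finset.univ.filter (fun y : P => y ∈ π x)) A
    rw [h1, hinter _ _ hx, hLf_card] at h2
    omega
  -- the pole of l
  set p0 : P := π.symm l with hp0
  have hπp0 : π p0 = l := π.apply_symm_apply l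
  have hne_l : ∀ x : P, x ≠ p0 → π x ≠ l := by
    intro x hx h
    exact hx (π.injective (h.trans hπp0.symm))
  have hcardP : Fintype.card P = n ^ 2 + n + 1 := by
    have h := Configuration.ProjectivePlane.card_points P L
    rw [hord] at h; exact h
  have hNA : Aᶜ.card = n ^ 2 := by
    rw [Finset.card_compl, hA_card, hcardP]; omega
  -- the intersection-point function
  have hzex : ∀ q : P × P, π q.1 ≠ π q.2 → ∃ z : P,
      (z ∈ π q.1 ∧ z ∈ π q.2) ∧ ∀ w : P, w ∈ π q.1 → w ∈ π q.2 → w = z := by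
    intro q h
    obtain ⟨z, hz, hzu⟩ := huniq_pt _ _ h
    exact ⟨z, hz, fun w h1 h2 => hzu w ⟨h1, h2⟩⟩
  choose zf0 hzf0 hzf0u using hzex
  set zf : P × P → P := fun q =>
    if h : π q.1 ≠ π q.2 then zf0 q h else q.1 with hzf_def
  have hzf : ∀ (q : P × P) (h : π q.1 ≠ π q.2), zf q = zf0 q h := by
    intro q h
    simp only [hzf_def]
    exact dif_pos h
  -- the pairs finset
  set S : Finset (P × P) := (Aᶜ \ {p0}).biUnion
      (fun x => ((Finset.univ.filter (fun y : P => y ∈ π x)) \ A).image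
        (fun y => (x, y))) with hS
  have hdisj : ∀ x ∈ Aᶜ \ {p0}, ∀ y ∈ Aᶜ \ {p0}, x ≠ y →
      Disjoint (((Finset.univ.filter (fun w : P => w ∈ π x)) \ A).image (fun w => (x, w)))
        (((Finset.univ.filter (fun w : P => w ∈ π y)) \ A).image (fun w => (y, w))) := by
    intro x _ y _ hxy
    rw [Finset.disjoint_left]
    intro q hq1 hq2
    obtain ⟨w1, -, hw1⟩ := Finset.mem_image.mp hq1
    obtain ⟨w2, -, hw2⟩ := Finset.mem_image.mp hq2
    exact hxy (congrArg Prod.fst (hw1.trans hw2.symm))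
  have hScard : S.card = (Aᶜ \ {p0}).card * n := by
    rw [hS, Finset.card_biUnion hdisj]
    have hterm : ∀ x ∈ Aᶜ \ {p0},
        (((Finset.univ.filter (fun y : P => y ∈ π x)) \ A).image (fun y => (x, y))).card
          = n := by
      intro x hx
      rw [Finset.card_image_of_injective _ (fun y₁ y₂ h => congrArg Prod.snd h)]
      apply hNbr
      apply hne_l
      rw [Finset.mem_sdiff] at hx
      simpa using hx.2
    rw [Finset.sum_congr rfl hterm, Finset.sum_const, smul_eq_mul]
  have hScard_ge : n ^ 3 - n ≤ S.card := by
    have h1 := Finset.le_card_sdiff ({p0} : Finset P) Aᶜ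
    rw [Finset.card_singleton, hNA] at h1
    have h2 : (n ^ 2 - 1) * n ≤ S.card := by
      rw [hScard]; exact Nat.mul_le_mul_right n h1
    calc n ^ 3 - n = n ^ 2 * n - 1 * n := by rw [pow_succ, one_mul]
      _ = (n ^ 2 - 1) * n := (Nat.sub_mul _ _ _).symm
      _ ≤ S.card := h2
  -- the ordered-triangles finset
  set OT : Finset (P × P × P) := Finset.univ.filter
      (fun t : P × P × P => t.1 ∉ π t.1 ∧ t.2.1 ∉ π t.2.1 ∧ t.2.2 ∉ π t.2.2 ∧
        t.1 ≠ t.2.1 ∧ t.1 ≠ t.2.2 ∧ t.2.1 ≠ t.2.2 ∧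
        t.2.1 ∈ π t.1 ∧ t.2.2 ∈ π t.2.1 ∧ t.1 ∈ π t.2.2) with hOT
  have hOT_ge : S.card ≤ OT.card := by
    apply Finset.card_le_card_of_injOn (fun q => (q.1, q.2, zf q))
    · intro q hq
      rw [hS, Finset.mem_coe, Finset.mem_biUnion] at hq
      obtain ⟨x, hx, hq⟩ := hq
      obtain ⟨y, hy, rfl⟩ := Finset.mem_image.mp hq
      rw [Finset.mem_sdiff, Finset.mem_compl] at hx
      rw [Finset.mem_sdiff, Finset.mem_filter] at hy
      have hxabs : x ∉ π x := fun h => hx.1 ((hmemA x).mpr h)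
      have hyabs : y ∉ π y := fun h => hy.2 ((hmemA y).mpr h)
      have hyπ : y ∈ π x := hy.1.2
      have hxyne : x ≠ y := by rintro rfl; exact hxabs hyπ
      have hllne : π (x, y).1 ≠ π (x, y).2 := fun h => hxyne (π.injective h)
      have hz1 : zf (x, y) ∈ π x := by rw [hzf _ hllne]; exact (hzf0 _ hllne).1
      have hz2 : zf (x, y) ∈ π y := by rw [hzf _ hllne]; exact (hzf0 _ hllne).2
      set z : P := zf (x, y) with hzdef
      have hz_ne_x : z ≠ x := fun h => hxabs (h ▸ hz1)
      have hz_ne_y : z ≠ y := fun h => hyabs (h ▸ hz2)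
      have hz_nonabs : z ∉ π z := by
        intro hzz
        have hx_in_πz : x ∈ π z := (hπ z x).mp hz1
        have hx_in_πy : x ∈ π y := (hπ y x).mp hyπ
        obtain ⟨m, -, hmu⟩ := huniq_ln x z (Ne.symm hz_ne_x)
        have e1 : π y = m := hmu (π y) ⟨hx_in_πy, hz2⟩
        have e2 : π z = m := hmu (π z) ⟨hx_in_πz, hzz⟩
        exact hz_ne_y (π.injective (e2.trans e1.symm))
      rw [hOT, Finset.mem_coe, Finset.mem_filter]
      exact ⟨Finset.mem_univ _, hxabs, hyabs, hz_nonabs, hxyne,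
        Ne.symm hz_ne_x, Ne.symm hz_ne_y, hyπ, hz2, (hπ z x).mp hz1⟩
    · intro q1 _ q2 _ h
      have h1 := congrArg Prod.fst h
      have h2 := congrArg (fun t : P × P × P => t.2.1) h
      exact Prod.ext h1 h2
  -- the index function
  have hidx_ex : ∀ x : P, π x ≠ l → ∃ i : Fin (n + 1), a i ∈ π x := by
    intro x hx
    obtain ⟨z, ⟨hz1, hz2⟩, -⟩ := huniq_pt (π x) l hx
    have hzA : z ∈ A := by rw [hal]; simp [hz2]
    rw [hA_image] at hzA
    obtain ⟨i, -, rfl⟩ := Finset.mem_image.mp hzA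
    exact ⟨i, hz1⟩
  choose idx0 hidx0 using hidx_ex
  set idx : P → Fin (n + 1) := fun x =>
    if h : π x ≠ l then idx0 x h else ⟨0, Nat.succ_pos n⟩ with hidx_def
  have hidx : ∀ x : P, π x ≠ l → a (idx x) ∈ π x := by
    intro x hx
    have he : idx x = idx0 x hx := by simp only [hidx_def]; exact dif_pos hx
    rw [he]; exact hidx0 x hx
  -- tangent lines at vertices of triangles differ from l
  have hkey : ∀ x y : P, x ∉ π x → y ∉ π y → y ∈ π x → π x ≠ l := by
    intro x y hx hy hxy h
    apply hy
    have hyA : y ∈ A := by rw [hal]; simp [h ▸ hxy]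
    exact (hmemA y).mp hyA
  -- indices of adjacent non-absolute points differ
  have hidx_ne : ∀ x y : P, x ∉ π x → y ∉ π y → y ∈ π x → idx x ≠ idx y := by
    intro x y hx hy hxy h
    have hπxl := hkey x y hx hy hxy
    have hπyl := hkey y x hy hx ((hπ y x).mp hxy)
    have h1 : a (idx x) ∈ π x := hidx x hπxl
    have h2 : a (idx x) ∈ π y := by rw [h]; exact hidx y hπyl
    have hx_in : x ∈ π (a (idx x)) := (hπ (a (idx x)) x).mp h1
    have hx_in_y : x ∈ π y := (hπ y x).mp hxy
    have hxa : x ≠ a (idx x) := by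
      intro he; rw [← he] at h1; exact hx h1
    obtain ⟨m, -, hmu⟩ := huniq_ln x (a (idx x)) hxa
    have e1 : π y = m := hmu (π y) ⟨hx_in_y, h2⟩
    have e2 : π (a (idx x)) = m := hmu (π (a (idx x))) ⟨hx_in, ha_abs (idx x)⟩
    have hya : y = a (idx x) := π.injective (e1.trans e2.symm)
    exact hy (by rw [hya]; exact ha_abs (idx x))
  -- the triangle-set map
  set f : P × P × P → Set P := fun t => {t.1, t.2.1, t.2.2} with hf
  -- fibers of f on OT have size at most 6
  have hfiber : OT.card ≤ 6 * (OT.image f).card := by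
    apply Finset.card_le_mul_card_image
    intro b hb
    obtain ⟨s, hs, rfl⟩ := Finset.mem_image.mp hb
    obtain ⟨x, y, z⟩ := s
    have hsub : OT.filter (fun t => f t = f (x, y, z)) ⊆
        ({(x, y, z), (x, z, y), (y, x, z), (y, z, x), (z, x, y), (z, y, x)} :
          Finset (P × P × P)) := by
      intro t ht
      obtain ⟨t1, t2, t3⟩ := t
      rw [Finset.mem_filter] at ht
      obtain ⟨htOT, hteq⟩ := ht
      rw [hOT, Finset.mem_filter] at htOT
      obtain ⟨-, -, -, -, h12, h13, h23, -, -, -⟩ := htOT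
      have hset : ({t1, t2, t3} : Set P) = ({x, y, z} : Set P) := hteq
      have hperm := triple_perm_six hset h12 h13 h23
      simp only [Finset.mem_insert, Finset.mem_singleton, Prod.mk.injEq]
      exact hperm
    calc (OT.filter (fun t => f t = f (x, y, z))).card
        ≤ _ := Finset.card_le_card hsub
      _ ≤ 6 := by
          have h := List.toFinset_card_le
            [(x, y, z), (x, z, y), (y, x, z), (y, z, x), (z, x, y), (z, y, x)]
          simpa using h
  -- the image lands inside Tset
  have himg_sub : ↑(OT.image f) ⊆ Tset := by
    intro b hb
    rw [Finset.coe_image] at hb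
    obtain ⟨s, hs, rfl⟩ := hb
    obtain ⟨x, y, z⟩ := s
    rw [Finset.mem_coe, hOT, Finset.mem_filter] at hs
    obtain ⟨-, hx, hy, hz, hxy, hxz, hyz, hyπ, hzπ, hxπ⟩ := hs
    have hzx : z ∈ π x := (hπ z x).mpr hxπ
    have hπxl := hkey x y hx hy hyπ
    have hπyl := hkey y z hy hz hzπ
    have hπzl := hkey z x hz hx hxπ
    rw [hTset]
    refine ⟨idx x, idx y, idx z, x, y, z,
      hidx_ne x y hx hy hyπ, hidx_ne x z hx hz hzx, hidx_ne y z hy hz hzπ,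
      hxy, hxz, hyz,
      ⟨(hπ (a (idx x)) x).mp (hidx x hπxl),
        fun h => hx (by rw [h]; exact ha_abs (idx x))⟩,
      ⟨(hπ (a (idx y)) y).mp (hidx y hπyl),
        fun h => hy (by rw [h]; exact ha_abs (idx y))⟩,
      ⟨(hπ (a (idx z)) z).mp (hidx z hπzl),
        fun h => hz (by rw [h]; exact ha_abs (idx z))⟩,
      rfl, (hπ y x).mp hyπ, (hπ z y).mp hzπ, (hπ x z).mp hxπ⟩
  have hT_fin : Tset.Finite := Set.toFinite _
  have himg_le : (OT.image f).card ≤ Tset.ncard := by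
    rw [← Set.ncard_coe_finset]
    exact Set.ncard_le_ncard himg_sub hT_fin
  -- final arithmetic
  have hchain : n ^ 3 - n ≤ 6 * Tset.ncard := by
    calc n ^ 3 - n ≤ S.card := hScard_ge
      _ ≤ OT.card := hOT_ge
      _ ≤ 6 * (OT.image f).card := hfiber
      _ ≤ 6 * Tset.ncard := Nat.mul_le_mul_left 6 himg_le
  have hnn : n ≤ n ^ 3 := Nat.le_self_pow (by norm_num) n
  have hcast : ((n : ℤ) ^ 3 - n) ≤ 6 * (Tset.ncard : ℤ) := by
    zify [hnn] at hchain
    exact hchain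
  have h6 : ((n : ℤ) ^ 3 - n) / 6 ≤ (Tset.ncard : ℤ) := by
    have h := Int.ediv_le_ediv (by norm_num : (0 : ℤ) < 6) hcast
    rwa [Int.mul_ediv_cancel_left _ (by norm_num)] at h
  have h7 : 0 ≤ ((n : ℤ) + 1) * ((n : ℤ) / 2 - 1) := by
    have h2n : (2 : ℤ) ≤ (n : ℤ) := by exact_mod_cast hn2
    have hd : (1 : ℤ) ≤ (n : ℤ) / 2 := by omega
    nlinarith
  linarith
end

section
/- Let Π be a finite projective plane of even order n with an orthogonal polarity π whose n+1 absolute points a₁, …, a_{n+1} all lie on a common line l, with pole p = π(l), and let Nᵢ be the set of points on π(aᵢ) other than aᵢ. Suppose i, j, k are distinct indices and vᵢ ∈ Nᵢ, vⱼ ∈ Nⱼ, v_k ∈ N_k form a triangle in the polarity graph (vᵢ ∈ π(vⱼ), vⱼ ∈ π(v_k), v_k ∈ π(vᵢ)). Then the seven points {p, aᵢ, aⱼ, a_k, vᵢ, vⱼ, v_k} together with the seven lines obtained by applying π to them form a Fano subplane of Π. -/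
set_option maxHeartbeats 4000000 in
/-- Let `Π` be a finite projective plane of even order `n` with an
orthogonal polarity `π` whose `n + 1` absolute points `a i` all lie on a common line `l`
with pole `p` (`π p = l`), and let `Nᵢ` be the points of `π (a i)` other than `a i`.
If `i, j, k` are distinct and `vᵢ ∈ Nᵢ`, `vⱼ ∈ Nⱼ`, `v_k ∈ N_k` form a triangle of the
polarity graph, then the seven points `{p, aᵢ, aⱼ, a_k, vᵢ, vⱼ, v_k}` and the seven lines
obtained by applying `π` to them form a Fano subplane of `Π`. -/
theorem triangle_yields_fano_subplane
    {P L : Type*} [Membership P L] [Fintype P] [Fintype L]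
    [Configuration.ProjectivePlane P L]
    (n : ℕ) (hord : Configuration.ProjectivePlane.order P L = n) (hn : Even n)
    (π : P ≃ L) (hπ : ∀ p q : P, p ∈ π q ↔ q ∈ π p)
    (a : Fin (n + 1) → P) (ha_inj : Function.Injective a)
    (ha_abs : ∀ i, a i ∈ π (a i))
    (ha_all : ∀ x : P, x ∈ π x → ∃ i, x = a i)
    (l : L) (hl : ∀ i, a i ∈ l)
    (p : P) (hp : π p = l)
    (i j k : Fin (n + 1)) (hij : i ≠ j) (hik : i ≠ k) (hjk : j ≠ k)
    (vi vj vk : P)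
    (hvi : vi ∈ π (a i) ∧ vi ≠ a i)
    (hvj : vj ∈ π (a j) ∧ vj ≠ a j)
    (hvk : vk ∈ π (a k) ∧ vk ≠ a k)
    (t1 : vi ∈ π vj) (t2 : vj ∈ π vk) (t3 : vk ∈ π vi) :
    IsFanoSubplane ({p, a i, a j, a k, vi, vj, vk} : Set P)
      ({π p, π (a i), π (a j), π (a k), π vi, π vj, π vk} : Set L) := by
  classical
  -- uniqueness of the line through two distinct points
  have uline : ∀ {x y : P} {l₁ l₂ : L}, x ≠ y → x ∈ l₁ → y ∈ l₁ → x ∈ l₂ → y ∈ l₂ → l₁ = l₂ :=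
    fun hxy h1 h2 h3 h4 =>
      (Configuration.Nondegenerate.eq_or_eq h1 h2 h3 h4).resolve_left hxy
  have hane : ∀ m m' : Fin (n + 1), m ≠ m' → a m ≠ a m' := fun _ _ h e => h (ha_inj e)
  -- no tangent line equals l
  have hπal : ∀ m : Fin (n + 1), π (a m) ≠ l := by
    intro m hm
    obtain ⟨m', hm'⟩ : ∃ m', m' ≠ m := by
      rcases eq_or_ne m i with rfl | h
      · exact ⟨j, Ne.symm hij⟩
      · exact ⟨i, Ne.symm h⟩
    have h1 : a m' ∈ π (a m) := by rw [hm]; exact hl m'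
    have h2 : a m ∈ π (a m') := (hπ _ _).mp h1
    have h3 : l = π (a m') := uline (hane m' m hm') (hl m') (hl m) (ha_abs m') h2
    exact hm' (ha_inj (π.injective (hm.trans h3))).symm
  have hpnabs : p ∉ π p := by
    intro h
    obtain ⟨m, rfl⟩ := ha_all p h
    exact hπal m hp
  have hpl : p ∉ l := by rw [← hp]; exact hpnabs
  -- basic positive incidences
  have hai_pp : a i ∈ π p := by rw [hp]; exact hl i
  have haj_pp : a j ∈ π p := by rw [hp]; exact hl j
  have hak_pp : a k ∈ π p := by rw [hp]; exact hl k
  have hp_ai : p ∈ π (a i) := (hπ _ _).mp hai_pp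
  have hp_aj : p ∈ π (a j) := (hπ _ _).mp haj_pp
  have hp_ak : p ∈ π (a k) := (hπ _ _).mp hak_pp
  have habs_i : a i ∈ π (a i) := ha_abs i
  have habs_j : a j ∈ π (a j) := ha_abs j
  have habs_k : a k ∈ π (a k) := ha_abs k
  have hvi_ai : vi ∈ π (a i) := hvi.1
  have hvj_aj : vj ∈ π (a j) := hvj.1
  have hvk_ak : vk ∈ π (a k) := hvk.1
  have hai_vi : a i ∈ π vi := (hπ _ _).mp hvi.1
  have haj_vj : a j ∈ π vj := (hπ _ _).mp hvj.1
  have hak_vk : a k ∈ π vk := (hπ _ _).mp hvk.1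
  have t1' : vj ∈ π vi := (hπ _ _).mp t1
  have t2' : vk ∈ π vj := (hπ _ _).mp t2
  have t3' : vi ∈ π vk := (hπ _ _).mp t3
  -- the vertices avoid l
  have hvil : vi ∉ l := fun h => hπal i (uline hvi.2 hvi.1 habs_i h (hl i))
  have hvjl : vj ∉ l := fun h => hπal j (uline hvj.2 hvj.1 habs_j h (hl j))
  have hvkl : vk ∉ l := fun h => hπal k (uline hvk.2 hvk.1 habs_k h (hl k))
  have hvi_pp : vi ∉ π p := by rw [hp]; exact hvil
  have hvj_pp : vj ∉ π p := by rw [hp]; exact hvjl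
  have hvk_pp : vk ∉ π p := by rw [hp]; exact hvkl
  -- the vertices differ from the pole
  have hvip : vi ≠ p := fun e => hvkl (by rw [← hp, ← e]; exact t3)
  have hvjp : vj ≠ p := fun e => hvil (by rw [← hp, ← e]; exact t1)
  have hvkp : vk ≠ p := fun e => hvjl (by rw [← hp, ← e]; exact t2)
  -- vertices are non-absolute
  have hvinabs : vi ∉ π vi := by
    intro h; obtain ⟨m, e⟩ := ha_all vi h; exact hvil (by rw [e]; exact hl m)
  have hvjnabs : vj ∉ π vj := by
    intro h; obtain ⟨m, e⟩ := ha_all vj h; exact hvjl (by rw [e]; exact hl m)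
  have hvknabs : vk ∉ π vk := by
    intro h; obtain ⟨m, e⟩ := ha_all vk h; exact hvkl (by rw [e]; exact hl m)
  -- vertices pairwise distinct
  have hvij : vi ≠ vj := fun e => hvjnabs (e ▸ t1)
  have hvjk : vj ≠ vk := fun e => hvknabs (e ▸ t2)
  have hvik : vi ≠ vk := fun e => hvknabs (e ▸ t3)
  -- absolute points off other tangent lines
  have haa : ∀ m m' : Fin (n + 1), m ≠ m' → a m' ∉ π (a m) := by
    intro m m' hne h
    exact hπal m (uline (hane m' m (Ne.symm hne)) h (ha_abs m) (hl m') (hl m))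
  have haj_ai : a j ∉ π (a i) := haa i j hij
  have hak_ai : a k ∉ π (a i) := haa i k hik
  have hai_aj : a i ∉ π (a j) := haa j i (Ne.symm hij)
  have hak_aj : a k ∉ π (a j) := haa j k hjk
  have hai_ak : a i ∉ π (a k) := haa k i (Ne.symm hik)
  have haj_ak : a j ∉ π (a k) := haa k j (Ne.symm hjk)
  -- vertices off other tangent lines
  have key : ∀ (m m' : Fin (n + 1)) (v : P), m ≠ m' → v ∈ π (a m') → v ≠ p → v ∉ π (a m) := by
    intro m m' v hne hv hvp h
    have h1 : a m ∈ π v := (hπ _ _).mp h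
    have h2 : a m' ∈ π v := (hπ _ _).mp hv
    have h3 : l = π v := uline (hane m m' hne) (hl m) (hl m') h1 h2
    exact hvp (π.injective (hp.trans h3)).symm
  have hvj_ai : vj ∉ π (a i) := key i j vj hij hvj.1 hvjp
  have hvk_ai : vk ∉ π (a i) := key i k vk hik hvk.1 hvkp
  have hvi_aj : vi ∉ π (a j) := key j i vi (Ne.symm hij) hvi.1 hvip
  have hvk_aj : vk ∉ π (a j) := key j k vk hjk hvk.1 hvkp
  have hvi_ak : vi ∉ π (a k) := key k i vi (Ne.symm hik) hvi.1 hvip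
  have hvj_ak : vj ∉ π (a k) := key k j vj (Ne.symm hjk) hvj.1 hvjp
  have hai_vj : a i ∉ π vj := fun h => hvj_ai ((hπ _ _).mp h)
  have hai_vk : a i ∉ π vk := fun h => hvk_ai ((hπ _ _).mp h)
  have haj_vi : a j ∉ π vi := fun h => hvi_aj ((hπ _ _).mp h)
  have haj_vk : a j ∉ π vk := fun h => hvk_aj ((hπ _ _).mp h)
  have hak_vi : a k ∉ π vi := fun h => hvi_ak ((hπ _ _).mp h)
  have hak_vj : a k ∉ π vj := fun h => hvj_ak ((hπ _ _).mp h)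
  have hp_vi : p ∉ π vi := fun h => hvi_pp ((hπ _ _).mp h)
  have hp_vj : p ∉ π vj := fun h => hvj_pp ((hπ _ _).mp h)
  have hp_vk : p ∉ π vk := fun h => hvk_pp ((hπ _ _).mp h)
  -- point distinctness
  have hp_ne_ai : p ≠ a i := fun e => hpl (by rw [e]; exact hl i)
  have hp_ne_aj : p ≠ a j := fun e => hpl (by rw [e]; exact hl j)
  have hp_ne_ak : p ≠ a k := fun e => hpl (by rw [e]; exact hl k)
  have hp_ne_vi : p ≠ vi := Ne.symm hvip
  have hp_ne_vj : p ≠ vj := Ne.symm hvjp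
  have hp_ne_vk : p ≠ vk := Ne.symm hvkp
  have haij : a i ≠ a j := hane i j hij
  have haik : a i ≠ a k := hane i k hik
  have hajk : a j ≠ a k := hane j k hjk
  have hai_ne_vi : a i ≠ vi := Ne.symm hvi.2
  have haj_ne_vj : a j ≠ vj := Ne.symm hvj.2
  have hak_ne_vk : a k ≠ vk := Ne.symm hvk.2
  have hai_ne_vj : a i ≠ vj := fun e => hvjl (by rw [← e]; exact hl i)
  have hai_ne_vk : a i ≠ vk := fun e => hvkl (by rw [← e]; exact hl i)
  have haj_ne_vi : a j ≠ vi := fun e => hvil (by rw [← e]; exact hl j)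
  have haj_ne_vk : a j ≠ vk := fun e => hvkl (by rw [← e]; exact hl j)
  have hak_ne_vi : a k ≠ vi := fun e => hvil (by rw [← e]; exact hl k)
  have hak_ne_vj : a k ≠ vj := fun e => hvjl (by rw [← e]; exact hl k)
  have πne : ∀ {x y : P}, x ≠ y → π x ≠ π y := fun h e => h (π.injective e)
  -- cardinalities
  have card_ps : ({p, a i, a j, a k, vi, vj, vk} : Set P).ncard = 7 := by
    rw [Set.ncard_insert_of_notMem
        (by simp [hp_ne_ai, hp_ne_aj, hp_ne_ak, hp_ne_vi, hp_ne_vj, hp_ne_vk]) (Set.toFinite _),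
      Set.ncard_insert_of_notMem
        (by simp [haij, haik, hai_ne_vi, hai_ne_vj, hai_ne_vk]) (Set.toFinite _),
      Set.ncard_insert_of_notMem
        (by simp [hajk, haj_ne_vi, haj_ne_vj, haj_ne_vk]) (Set.toFinite _),
      Set.ncard_insert_of_notMem
        (by simp [hak_ne_vi, hak_ne_vj, hak_ne_vk]) (Set.toFinite _),
      Set.ncard_insert_of_notMem (by simp [hvij, hvik]) (Set.toFinite _),
      Set.ncard_insert_of_notMem (by simp [hvjk]) (Set.toFinite _),
      Set.ncard_singleton]
  have ls_eq : ({π p, π (a i), π (a j), π (a k), π vi, π vj, π vk} : Set L)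
      = π '' ({p, a i, a j, a k, vi, vj, vk} : Set P) := by
    simp only [Set.image_insert_eq, Set.image_singleton]
  have card_ls : ({π p, π (a i), π (a j), π (a k), π vi, π vj, π vk} : Set L).ncard = 7 := by
    rw [ls_eq, Set.ncard_image_of_injective _ π.injective, card_ps]
  -- existence-uniqueness helpers
  have exul : ∀ (x y : P) (S : Set L) (w : L), x ≠ y → w ∈ S → x ∈ w → y ∈ w →
      ∃! m, m ∈ S ∧ x ∈ m ∧ y ∈ m := fun x y S w hxy hw hxw hyw =>
    ⟨w, ⟨hw, hxw, hyw⟩, fun m hm => uline hxy hm.2.1 hm.2.2 hxw hyw⟩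
  have exup : ∀ (l₁ l₂ : L) (S : Set P) (w : P), l₁ ≠ l₂ → w ∈ S → w ∈ l₁ → w ∈ l₂ →
      ∃! z, z ∈ S ∧ z ∈ l₁ ∧ z ∈ l₂ := fun l₁ l₂ S w hne hw hw1 hw2 =>
    ⟨w, ⟨hw, hw1, hw2⟩, fun z hz =>
      (Configuration.Nondegenerate.eq_or_eq hz.2.1 hw1 hz.2.2 hw2).resolve_right hne⟩
  refine ⟨card_ps, card_ls, ?_, ?_, ?_, ?_⟩
  · -- unique line through two of the points
    intro x hx y hy hxy
    simp only [Set.mem_insert_iff, Set.mem_singleton_iff] at hx hy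
    rcases hx with rfl | rfl | rfl | rfl | rfl | rfl | rfl <;>
      rcases hy with rfl | rfl | rfl | rfl | rfl | rfl | rfl <;>
      first
        | exact absurd rfl hxy
        | exact exul _ _ _ (π p) hxy (by simp) (by assumption) (by assumption)
        | exact exul _ _ _ (π (a i)) hxy (by simp) (by assumption) (by assumption)
        | exact exul _ _ _ (π (a j)) hxy (by simp) (by assumption) (by assumption)
        | exact exul _ _ _ (π (a k)) hxy (by simp) (by assumption) (by assumption)
        | exact exul _ _ _ (π vi) hxy (by simp) (by assumption) (by assumption)
        | exact exul _ _ _ (π vj) hxy (by simp) (by assumption) (by assumption)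
        | exact exul _ _ _ (π vk) hxy (by simp) (by assumption) (by assumption)
  · -- unique common point of two of the lines
    intro m hm m' hm' hne
    simp only [Set.mem_insert_iff, Set.mem_singleton_iff] at hm hm'
    rcases hm with rfl | rfl | rfl | rfl | rfl | rfl | rfl <;>
      rcases hm' with rfl | rfl | rfl | rfl | rfl | rfl | rfl <;>
      first
        | exact absurd rfl hne
        | exact exup _ _ _ p hne (by simp) (by assumption) (by assumption)
        | exact exup _ _ _ (a i) hne (by simp) (by assumption) (by assumption)
        | exact exup _ _ _ (a j) hne (by simp) (by assumption) (by assumption)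
        | exact exup _ _ _ (a k) hne (by simp) (by assumption) (by assumption)
        | exact exup _ _ _ vi hne (by simp) (by assumption) (by assumption)
        | exact exup _ _ _ vj hne (by simp) (by assumption) (by assumption)
        | exact exup _ _ _ vk hne (by simp) (by assumption) (by assumption)
  · -- each line carries exactly three of the points
    have fin3 : ∀ (m : L) (z₁ z₂ z₃ : P), z₁ ≠ z₂ → z₁ ≠ z₃ → z₂ ≠ z₃ →
        {x | x ∈ ({p, a i, a j, a k, vi, vj, vk} : Set P) ∧ x ∈ m} = {z₁, z₂, z₃} →
        {x | x ∈ ({p, a i, a j, a k, vi, vj, vk} : Set P) ∧ x ∈ m}.ncard = 3 :=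
      fun m z₁ z₂ z₃ h12 h13 h23 he => Set.ncard_eq_three.mpr ⟨z₁, z₂, z₃, h12, h13, h23, he⟩
    intro m hm
    simp only [Set.mem_insert_iff, Set.mem_singleton_iff] at hm
    rcases hm with rfl | rfl | rfl | rfl | rfl | rfl | rfl
    · refine fin3 _ (a i) (a j) (a k) haij haik hajk ?_
      ext x
      simp only [Set.mem_setOf_eq, Set.mem_insert_iff, Set.mem_singleton_iff]
      constructor
      · rintro ⟨rfl | rfl | rfl | rfl | rfl | rfl | rfl, hxm⟩ <;>
          first | exact absurd hxm (by assumption) | simp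
      · rintro (rfl | rfl | rfl) <;> exact ⟨by simp, by assumption⟩
    · refine fin3 _ p (a i) vi hp_ne_ai hp_ne_vi hai_ne_vi ?_
      ext x
      simp only [Set.mem_setOf_eq, Set.mem_insert_iff, Set.mem_singleton_iff]
      constructor
      · rintro ⟨rfl | rfl | rfl | rfl | rfl | rfl | rfl, hxm⟩ <;>
          first | exact absurd hxm (by assumption) | simp
      · rintro (rfl | rfl | rfl) <;> exact ⟨by simp, by assumption⟩
    · refine fin3 _ p (a j) vj hp_ne_aj hp_ne_vj haj_ne_vj ?_
      ext x
      simp only [Set.mem_setOf_eq, Set.mem_insert_iff, Set.mem_singleton_iff]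
      constructor
      · rintro ⟨rfl | rfl | rfl | rfl | rfl | rfl | rfl, hxm⟩ <;>
          first | exact absurd hxm (by assumption) | simp
      · rintro (rfl | rfl | rfl) <;> exact ⟨by simp, by assumption⟩
    · refine fin3 _ p (a k) vk hp_ne_ak hp_ne_vk hak_ne_vk ?_
      ext x
      simp only [Set.mem_setOf_eq, Set.mem_insert_iff, Set.mem_singleton_iff]
      constructor
      · rintro ⟨rfl | rfl | rfl | rfl | rfl | rfl | rfl, hxm⟩ <;>
          first | exact absurd hxm (by assumption) | simp
      · rintro (rfl | rfl | rfl) <;> exact ⟨by simp, by assumption⟩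
    · refine fin3 _ (a i) vj vk hai_ne_vj hai_ne_vk hvjk ?_
      ext x
      simp only [Set.mem_setOf_eq, Set.mem_insert_iff, Set.mem_singleton_iff]
      constructor
      · rintro ⟨rfl | rfl | rfl | rfl | rfl | rfl | rfl, hxm⟩ <;>
          first | exact absurd hxm (by assumption) | simp
      · rintro (rfl | rfl | rfl) <;> exact ⟨by simp, by assumption⟩
    · refine fin3 _ (a j) vi vk haj_ne_vi haj_ne_vk hvik ?_
      ext x
      simp only [Set.mem_setOf_eq, Set.mem_insert_iff, Set.mem_singleton_iff]
      constructor
      · rintro ⟨rfl | rfl | rfl | rfl | rfl | rfl | rfl, hxm⟩ <;>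
          first | exact absurd hxm (by assumption) | simp
      · rintro (rfl | rfl | rfl) <;> exact ⟨by simp, by assumption⟩
    · refine fin3 _ (a k) vi vj hak_ne_vi hak_ne_vj hvij ?_
      ext x
      simp only [Set.mem_setOf_eq, Set.mem_insert_iff, Set.mem_singleton_iff]
      constructor
      · rintro ⟨rfl | rfl | rfl | rfl | rfl | rfl | rfl, hxm⟩ <;>
          first | exact absurd hxm (by assumption) | simp
      · rintro (rfl | rfl | rfl) <;> exact ⟨by simp, by assumption⟩
  · -- each point lies on exactly three of the lines
    have fin3' : ∀ (x : P) (m₁ m₂ m₃ : L), m₁ ≠ m₂ → m₁ ≠ m₃ → m₂ ≠ m₃ →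
        {m | m ∈ ({π p, π (a i), π (a j), π (a k), π vi, π vj, π vk} : Set L) ∧ x ∈ m}
          = {m₁, m₂, m₃} →
        {m | m ∈ ({π p, π (a i), π (a j), π (a k), π vi, π vj, π vk} : Set L) ∧ x ∈ m}.ncard
          = 3 :=
      fun x m₁ m₂ m₃ h12 h13 h23 he => Set.ncard_eq_three.mpr ⟨m₁, m₂, m₃, h12, h13, h23, he⟩
    intro x hx
    simp only [Set.mem_insert_iff, Set.mem_singleton_iff] at hx
    rcases hx with rfl | rfl | rfl | rfl | rfl | rfl | rfl
    · refine fin3' _ (π (a i)) (π (a j)) (π (a k)) (πne haij) (πne haik) (πne hajk) ?_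
      ext m
      simp only [Set.mem_setOf_eq, Set.mem_insert_iff, Set.mem_singleton_iff]
      constructor
      · rintro ⟨rfl | rfl | rfl | rfl | rfl | rfl | rfl, hxm⟩ <;>
          first | exact absurd hxm (by assumption) | simp
      · rintro (rfl | rfl | rfl) <;> exact ⟨by simp, by assumption⟩
    · refine fin3' _ (π p) (π (a i)) (π vi) (πne hp_ne_ai) (πne hp_ne_vi) (πne hai_ne_vi) ?_
      ext m
      simp only [Set.mem_setOf_eq, Set.mem_insert_iff, Set.mem_singleton_iff]
      constructor
      · rintro ⟨rfl | rfl | rfl | rfl | rfl | rfl | rfl, hxm⟩ <;>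
          first | exact absurd hxm (by assumption) | simp
      · rintro (rfl | rfl | rfl) <;> exact ⟨by simp, by assumption⟩
    · refine fin3' _ (π p) (π (a j)) (π vj) (πne hp_ne_aj) (πne hp_ne_vj) (πne haj_ne_vj) ?_
      ext m
      simp only [Set.mem_setOf_eq, Set.mem_insert_iff, Set.mem_singleton_iff]
      constructor
      · rintro ⟨rfl | rfl | rfl | rfl | rfl | rfl | rfl, hxm⟩ <;>
          first | exact absurd hxm (by assumption) | simp
      · rintro (rfl | rfl | rfl) <;> exact ⟨by simp, by assumption⟩
    · refine fin3' _ (π p) (π (a k)) (π vk) (πne hp_ne_ak) (πne hp_ne_vk) (πne hak_ne_vk) ?_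
      ext m
      simp only [Set.mem_setOf_eq, Set.mem_insert_iff, Set.mem_singleton_iff]
      constructor
      · rintro ⟨rfl | rfl | rfl | rfl | rfl | rfl | rfl, hxm⟩ <;>
          first | exact absurd hxm (by assumption) | simp
      · rintro (rfl | rfl | rfl) <;> exact ⟨by simp, by assumption⟩
    · refine fin3' _ (π (a i)) (π vj) (π vk) (πne hai_ne_vj) (πne hai_ne_vk) (πne hvjk) ?_
      ext m
      simp only [Set.mem_setOf_eq, Set.mem_insert_iff, Set.mem_singleton_iff]
      constructor
      · rintro ⟨rfl | rfl | rfl | rfl | rfl | rfl | rfl, hxm⟩ <;>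
          first | exact absurd hxm (by assumption) | simp
      · rintro (rfl | rfl | rfl) <;> exact ⟨by simp, by assumption⟩
    · refine fin3' _ (π (a j)) (π vi) (π vk) (πne haj_ne_vi) (πne haj_ne_vk) (πne hvik) ?_
      ext m
      simp only [Set.mem_setOf_eq, Set.mem_insert_iff, Set.mem_singleton_iff]
      constructor
      · rintro ⟨rfl | rfl | rfl | rfl | rfl | rfl | rfl, hxm⟩ <;>
          first | exact absurd hxm (by assumption) | simp
      · rintro (rfl | rfl | rfl) <;> exact ⟨by simp, by assumption⟩
    · refine fin3' _ (π (a k)) (π vi) (π vj) (πne hak_ne_vi) (πne hak_ne_vj) (πne hvij) ?_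
      ext m
      simp only [Set.mem_setOf_eq, Set.mem_insert_iff, Set.mem_singleton_iff]
      constructor
      · rintro ⟨rfl | rfl | rfl | rfl | rfl | rfl | rfl, hxm⟩ <;>
          first | exact absurd hxm (by assumption) | simp
      · rintro (rfl | rfl | rfl) <;> exact ⟨by simp, by assumption⟩
end

section
/- Let Π be a finite projective plane of even order n ≥ 2 which admits an orthogonal polarity. Then Π contains at least (n³ - n)/6 - (n+1)(n/2 - 1) Fano subplanes; in particular, the number of Fano subplanes of Π is at least c·n³ for some absolute constant c > 0 (for all sufficiently large even n). -/
namespace FanoAux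

lemma even_card_of_invol {α : Type*} [DecidableEq α] :
    ∀ (s : Finset α), ∀ (f : α → α), (∀ a ∈ s, f a ∈ s) → (∀ a ∈ s, f (f a) = a) →
      (∀ a ∈ s, f a ≠ a) → Even s.card := by
  intro s
  induction s using Finset.strongInduction with
  | _ s ih =>
    intro f h1 h2 h3
    rcases s.eq_empty_or_nonempty with rfl | ⟨a, ha⟩
    · simp
    · have hfa : f a ∈ s := h1 a ha
      have hne : f a ≠ a := h3 a ha
      set t := s \ {a, f a} with ht
      have hsub : {a, f a} ⊆ s := by
        intro x hx; rcases Finset.mem_insert.1 hx with rfl | hx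
        · exact ha
        · rw [Finset.mem_singleton.1 hx]; exact hfa
      have htss : t ⊂ s := Finset.sdiff_ssubset hsub (by simp)
      have hmem : ∀ b ∈ t, b ∈ s ∧ b ≠ a ∧ b ≠ f a := by
        intro b hb
        rw [ht, Finset.mem_sdiff] at hb
        refine ⟨hb.1, ?_, ?_⟩ <;> intro e <;> apply hb.2 <;> simp [e]
      have hev : Even t.card := by
        refine ih t htss f ?_ ?_ ?_
        · intro b hb
          obtain ⟨hbs, hba, hbfa⟩ := hmem b hb
          rw [ht, Finset.mem_sdiff]
          refine ⟨h1 b hbs, ?_⟩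
          simp only [Finset.mem_insert, Finset.mem_singleton]
          rintro (e | e)
          · exact hbfa ((h2 b hbs).symm.trans (congrArg f e))
          · exact hba ((h2 b hbs).symm.trans ((congrArg f e).trans (h2 a ha)))
        · intro b hb; exact h2 b (hmem b hb).1
        · intro b hb; exact h3 b (hmem b hb).1
      have htcard : t.card = s.card - 2 := by
        rw [ht, Finset.card_sdiff_of_subset hsub, Finset.card_insert_of_notMem
          (fun h => hne.symm (Finset.mem_singleton.1 h)), Finset.card_singleton]
      have h2le : 2 ≤ s.card := by
        have h4 := Finset.card_le_card hsub
        rwa [Finset.card_insert_of_notMem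
          (fun h => hne.symm (Finset.mem_singleton.1 h)), Finset.card_singleton] at h4
      obtain ⟨k, hk⟩ := hev
      exact ⟨k + 1, by omega⟩

def seven {α : Type*} (a b c d e f g : α) (i : Fin 7) : α :=
  match i.val with
  | 0 => a | 1 => b | 2 => c | 3 => d | 4 => e | 5 => f | _ => g

lemma seven_range {α : Type*} (a b c d e f g : α) :
    Set.range (seven a b c d e f g) = {a, b, c, d, e, f, g} := by
  ext p
  simp only [Set.mem_range, Set.mem_insert_iff, Set.mem_singleton_iff]
  constructor
  · rintro ⟨i, rfl⟩
    fin_cases i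
    · exact .inl rfl
    · exact .inr (.inl rfl)
    · exact .inr (.inr (.inl rfl))
    · exact .inr (.inr (.inr (.inl rfl)))
    · exact .inr (.inr (.inr (.inr (.inl rfl))))
    · exact .inr (.inr (.inr (.inr (.inr (.inl rfl)))))
    · exact .inr (.inr (.inr (.inr (.inr (.inr rfl)))))
  · rintro (rfl | rfl | rfl | rfl | rfl | rfl | rfl)
    exacts [⟨0, rfl⟩, ⟨1, rfl⟩, ⟨2, rfl⟩, ⟨3, rfl⟩, ⟨4, rfl⟩, ⟨5, rfl⟩, ⟨6, rfl⟩]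

def fanoInc (i j : Fin 7) : Bool :=
  match j with
  | 0 => i == 1 || i == 2 || i == 3
  | 1 => i == 0 || i == 2 || i == 4
  | 2 => i == 0 || i == 1 || i == 5
  | 3 => i == 0 || i == 3 || i == 6
  | 4 => i == 1 || i == 4 || i == 6
  | 5 => i == 2 || i == 5 || i == 6
  | 6 => i == 3 || i == 4 || i == 5

lemma fano1 : ∀ i j : Fin 7, i ≠ j →
    ∃! k, fanoInc i k = true ∧ fanoInc j k = true := by
  simp only [ExistsUnique]; decide

lemma fano2 : ∀ i j : Fin 7, i ≠ j →
    ∃! k, fanoInc k i = true ∧ fanoInc k j = true := by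
  simp only [ExistsUnique]; decide

lemma fano3 : ∀ j : Fin 7, (Finset.univ.filter (fun i => fanoInc i j = true)).card = 3 := by
  decide

lemma fano4 : ∀ i : Fin 7, (Finset.univ.filter (fun j => fanoInc i j = true)).card = 3 := by
  decide

lemma isFanoSubplane_mk {P L : Type*} [Membership P L] (x : Fin 7 → P) (y : Fin 7 → L)
    (hx : Function.Injective x) (hy : Function.Injective y)
    (h : ∀ i j, x i ∈ y j ↔ fanoInc i j = true) :
    IsFanoSubplane (Set.range x) (Set.range y) := by
  classical
  have hrx : (Set.range x).ncard = 7 := by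
    have : Set.range x = ↑(Finset.univ.image x) := by simp
    rw [this, Set.ncard_coe_finset, Finset.card_image_of_injective _ hx, Finset.card_univ,
      Fintype.card_fin]
  have hry : (Set.range y).ncard = 7 := by
    have : Set.range y = ↑(Finset.univ.image y) := by simp
    rw [this, Set.ncard_coe_finset, Finset.card_image_of_injective _ hy, Finset.card_univ,
      Fintype.card_fin]
  refine ⟨hrx, hry, ?_, ?_, ?_, ?_⟩
  · rintro p ⟨i, rfl⟩ q ⟨j, rfl⟩ hpq
    have hij : i ≠ j := fun e => hpq (by rw [e])
    obtain ⟨k, hk, hk'⟩ := fano1 i j hij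
    refine ⟨y k, ⟨⟨k, rfl⟩, (h i k).2 hk.1, (h j k).2 hk.2⟩, ?_⟩
    rintro l ⟨⟨k', rfl⟩, h1, h2⟩
    exact congrArg y (hk' k' ⟨(h i k').1 h1, (h j k').1 h2⟩)
  · rintro l ⟨i, rfl⟩ m ⟨j, rfl⟩ hlm
    have hij : i ≠ j := fun e => hlm (by rw [e])
    obtain ⟨k, hk, hk'⟩ := fano2 i j hij
    refine ⟨x k, ⟨⟨k, rfl⟩, (h k i).2 hk.1, (h k j).2 hk.2⟩, ?_⟩
    rintro p ⟨⟨k', rfl⟩, h1, h2⟩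
    exact congrArg x (hk' k' ⟨(h k' i).1 h1, (h k' j).1 h2⟩)
  · rintro l ⟨j, rfl⟩
    have : {p | p ∈ Set.range x ∧ p ∈ y j} =
        ↑((Finset.univ.filter (fun i => fanoInc i j = true)).image x) := by
      ext p
      simp only [Set.mem_setOf_eq, Set.mem_range, Finset.coe_image, Set.mem_image,
        Finset.mem_coe, Finset.mem_filter, Finset.mem_univ, true_and]
      constructor
      · rintro ⟨⟨i, rfl⟩, hp⟩; exact ⟨i, (h i j).1 hp, rfl⟩
      · rintro ⟨i, hi, rfl⟩; exact ⟨⟨i, rfl⟩, (h i j).2 hi⟩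
    rw [this, Set.ncard_coe_finset, Finset.card_image_of_injective _ hx, fano3]
  · rintro p ⟨i, rfl⟩
    have : {l | l ∈ Set.range y ∧ x i ∈ l} =
        ↑((Finset.univ.filter (fun j => fanoInc i j = true)).image y) := by
      ext l
      simp only [Set.mem_setOf_eq, Set.mem_range, Finset.coe_image, Set.mem_image,
        Finset.mem_coe, Finset.mem_filter, Finset.mem_univ, true_and]
      constructor
      · rintro ⟨⟨j, rfl⟩, hp⟩; exact ⟨j, (h i j).1 hp, rfl⟩
      · rintro ⟨j, hj, rfl⟩; exact ⟨⟨j, rfl⟩, (h i j).2 hj⟩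
    rw [this, Set.ncard_coe_finset, Finset.card_image_of_injective _ hy, fano4]

end FanoAux
open FanoAux in
lemma FanoAux.key (P L : Type) [Membership P L] [Fintype P] [Fintype L]
    [Configuration.ProjectivePlane P L] {n : ℕ}
    (hord : Configuration.ProjectivePlane.order P L = n) (hev : Even n) (hn : 2 ≤ n)
    (π : P ≃ L) (hπ : ∀ p q : P, p ∈ π q ↔ q ∈ π p)
    (habs : {x : P | x ∈ π x}.ncard = n + 1) :
    n ^ 3 ≤ 6 * {x : Set P × Set L | IsFanoSubplane x.1 x.2}.ncard + n := by
  classical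
  have uniq_pt : ∀ {p q : P} {l m : L}, p ∈ l → p ∈ m → q ∈ l → q ∈ m → l ≠ m → p = q :=
    fun {p q l m} h1 h2 h3 h4 hlm =>
      (Configuration.Nondegenerate.eq_or_eq h1 h3 h2 h4).resolve_right hlm
  have uniq_ln : ∀ {p q : P} {l m : L}, p ∈ l → q ∈ l → p ∈ m → q ∈ m → p ≠ q → l = m :=
    fun {p q l m} h1 h2 h3 h4 hpq =>
      (Configuration.Nondegenerate.eq_or_eq h1 h2 h3 h4).resolve_left hpq
  have card_pts : ∀ l : L, (Finset.univ.filter (· ∈ l)).card = n + 1 := by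
    intro l
    have h1 := Configuration.ProjectivePlane.pointCount_eq P l
    rw [hord] at h1
    rw [← h1, Configuration.pointCount, Nat.card_eq_fintype_card, Fintype.card_subtype]
  have card_lns : ∀ p : P, (Finset.univ.filter (fun l : L => p ∈ l)).card = n + 1 := by
    intro p
    have h1 := Configuration.ProjectivePlane.lineCount_eq L p
    rw [hord] at h1
    rw [← h1, Configuration.lineCount, Nat.card_eq_fintype_card, Fintype.card_subtype]
  have cardP : Fintype.card P = n ^ 2 + n + 1 := by
    have := Configuration.ProjectivePlane.card_points P L
    rwa [hord] at this
  set A : Finset P := Finset.univ.filter (fun p => p ∈ π p) with hA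
  have hAcard : A.card = n + 1 := by
    have h1 : {x : P | x ∈ π x} = ↑A := by ext p; simp [hA]
    rwa [h1, Set.ncard_coe_finset] at habs
  -- every line contains an absolute point
  have line_abs : ∀ l : L, ∃ p, p ∈ l ∧ p ∈ π p := by
    intro l
    by_cases hl : π.symm l ∈ l
    · exact ⟨π.symm l, hl, by rwa [Equiv.apply_symm_apply]⟩
    · by_contra hno
      push_neg at hno
      have hmk : ∀ q : P, q ∈ l → π q ≠ l := by
        intro q hq he
        have h5 : π.symm l = q := he ▸ Equiv.symm_apply_apply π q
        exact hl (h5 ▸ hq)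
      obtain ⟨σ, hσ_mem⟩ : ∃ σ : P → P, ∀ q, q ∈ l → σ q ∈ π q ∧ σ q ∈ l := by
        refine ⟨fun q => if hq : π q ≠ l then Configuration.HasPoints.mkPoint hq else q,
          fun q hq => ?_⟩
        simp only [dif_pos (hmk q hq)]
        exact Configuration.HasPoints.mkPoint_ax (hmk q hq)
      have heven : Even ((Finset.univ.filter (· ∈ l)).card) := by
        apply even_card_of_invol _ σ
        · intro q hq
          simp only [Finset.mem_filter, Finset.mem_univ, true_and] at hq ⊢
          exact (hσ_mem q hq).2
        · intro q hq
          simp only [Finset.mem_filter, Finset.mem_univ, true_and] at hq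
          obtain ⟨h1, h2⟩ := hσ_mem q hq
          obtain ⟨h3, h4⟩ := hσ_mem (σ q) h2
          exact uniq_pt h3 h4 ((hπ q (σ q)).mpr h1) hq (hmk (σ q) h2)
        · intro q hq
          simp only [Finset.mem_filter, Finset.mem_univ, true_and] at hq
          intro he
          have h6 := (hσ_mem q hq).1
          rw [he] at h6
          exact hno q hq h6
      rw [card_pts l] at heven
      rw [Nat.even_add_one] at heven
      exact heven hev
  -- the absolute points form a line ℓ
  obtain ⟨s, hs, t, ht, hst⟩ := Finset.one_lt_card.mp (show 1 < A.card by omega)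
  have hs_abs : s ∈ π s := (Finset.mem_filter.mp hs).2
  have ht_abs : t ∈ π t := (Finset.mem_filter.mp ht).2
  obtain ⟨ℓ, hsℓ, htℓ⟩ : ∃ ℓ : L, s ∈ ℓ ∧ t ∈ ℓ :=
    ⟨Configuration.HasLines.mkLine hst, Configuration.HasLines.mkLine_ax hst⟩
  have claim1 : ∀ p, p ∈ ℓ → p ∈ π p := by
    intro p hp
    by_contra hpabs
    have hnep : ∀ u : P, u ∈ π u → u ≠ p := fun u hu he => hpabs (he ▸ hu)
    obtain ⟨φ, hφa⟩ : ∃ φ : P → L, ∀ u, u ∈ π u → u ∈ φ u ∧ p ∈ φ u := by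
      refine ⟨fun u => if h : u ≠ p then Configuration.HasLines.mkLine h else ℓ,
        fun u hu => ?_⟩
      simp only [dif_pos (hnep u hu)]
      exact Configuration.HasLines.mkLine_ax (hnep u hu)
    have hsub : Finset.univ.filter (fun m : L => p ∈ m) ⊆ A.image φ := by
      intro m hm
      simp only [Finset.mem_filter, Finset.mem_univ, true_and] at hm
      obtain ⟨u, hul, huabs⟩ := line_abs m
      refine Finset.mem_image.mpr ⟨u, Finset.mem_filter.mpr ⟨Finset.mem_univ u, huabs⟩, ?_⟩
      obtain ⟨h1, h2⟩ := hφa u huabs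
      exact uniq_ln h1 h2 hul hm (hnep u huabs)
    have hinj : Set.InjOn φ ↑A := by
      apply Finset.injOn_of_card_image_eq
      have hle := Finset.card_le_card hsub
      rw [card_lns p] at hle
      have hge := Finset.card_image_le (f := φ) (s := A)
      omega
    have hφs : φ s = ℓ := by
      obtain ⟨h1, h2⟩ := hφa s hs_abs
      exact uniq_ln h1 h2 hsℓ hp (hnep s hs_abs)
    have hφt : φ t = ℓ := by
      obtain ⟨h1, h2⟩ := hφa t ht_abs
      exact uniq_ln h1 h2 htℓ hp (hnep t ht_abs)
    exact hst (hinj (Finset.mem_coe.mpr hs) (Finset.mem_coe.mpr ht) (hφs.trans hφt.symm))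
  have abs_iff : ∀ p : P, p ∈ π p ↔ p ∈ ℓ := by
    have hPtsEq : Finset.univ.filter (· ∈ ℓ) = A := by
      apply Finset.eq_of_subset_of_card_le
      · intro p hp
        simp only [Finset.mem_filter, Finset.mem_univ, true_and] at hp
        exact Finset.mem_filter.mpr ⟨Finset.mem_univ p, claim1 p hp⟩
      · rw [card_pts ℓ, hAcard]
    intro p
    constructor
    · intro hp
      have h1 : p ∈ A := Finset.mem_filter.mpr ⟨Finset.mem_univ p, hp⟩
      rw [← hPtsEq] at h1
      exact (Finset.mem_filter.mp h1).2
    · exact claim1 p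
  set z : P := π.symm ℓ with hzdef
  have hπz : π z = ℓ := Equiv.apply_symm_apply π ℓ
  have hπne : ∀ {p : P}, p ≠ z → π p ≠ ℓ := by
    intro p hp he
    apply hp
    rw [hzdef, ← he, Equiv.symm_apply_apply]
  have hzℓ : z ∉ ℓ := by
    intro hz
    have h3 : 1 < (Finset.univ.filter (· ∈ ℓ)).card := by rw [card_pts ℓ]; omega
    obtain ⟨q, hq, hqz⟩ := Finset.exists_mem_ne h3 z
    simp only [Finset.mem_filter, Finset.mem_univ, true_and] at hq
    have hqabs : q ∈ π q := (abs_iff q).mpr hq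
    have hzq : z ∈ π q := (hπ z q).mpr (by rw [hπz]; exact hq)
    have h4 : π q = ℓ := uniq_ln hqabs hzq hq hz hqz
    exact hqz (by rw [hzdef, ← h4, Equiv.symm_apply_apply])
  -- the "tangent point" map
  obtain ⟨dpt, hdpt_ax⟩ : ∃ dpt : P → P, ∀ p, p ≠ z → dpt p ∈ π p ∧ dpt p ∈ ℓ := by
    refine ⟨fun p => if h : π p ≠ ℓ then Configuration.HasPoints.mkPoint h else z,
      fun p hp => ?_⟩
    simp only [dif_pos (hπne hp)]
    exact Configuration.HasPoints.mkPoint_ax (hπne hp)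
  set Fpts : Finset P → Set P := fun s => ↑s ∪ dpt '' ↑s ∪ {z} with hFptsdef
  set Tri : Finset (Finset P) :=
    Finset.univ.filter (fun s => s.card = 3 ∧ ∀ p ∈ s, ∀ q ∈ s, p ≠ q → p ∈ π q) with hTridef
  have main : ∀ s ∈ Tri, IsFanoSubplane (Fpts s) (π '' Fpts s) ∧
      (↑s : Set P) = {p | p ∈ Fpts s ∧ p ∉ ℓ ∧ p ≠ z} := by
    intro s hsT
    rw [hTridef, Finset.mem_filter] at hsT
    obtain ⟨-, h3, hadj⟩ := hsT
    obtain ⟨a, b, c, hab, hac, hbc, rfl⟩ := Finset.card_eq_three.mp h3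
    have hma : a ∈ ({a, b, c} : Finset P) := by simp
    have hmb : b ∈ ({a, b, c} : Finset P) := by simp
    have hmc : c ∈ ({a, b, c} : Finset P) := by simp
    have hba : b ∈ π a := hadj b hmb a hma hab.symm
    have hca : c ∈ π a := hadj c hmc a hma hac.symm
    have hab' : a ∈ π b := hadj a hma b hmb hab
    have hcb : c ∈ π b := hadj c hmc b hmb hbc.symm
    have hac' : a ∈ π c := hadj a hma c hmc hac
    have hbc' : b ∈ π c := hadj b hmb c hmc hbc
    have hπab : π a ≠ π b := fun h => hab (π.injective h)
    have hπac : π a ≠ π c := fun h => hac (π.injective h)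
    have hπbc : π b ≠ π c := fun h => hbc (π.injective h)
    -- the triangle vertices are not absolute
    have haℓ : a ∉ ℓ := by
      intro h
      have h1 : a ∈ π a := (abs_iff a).mpr h
      exact hac (uniq_pt h1 hab' hca hcb hπab)
    have hbℓ : b ∉ ℓ := by
      intro h
      have h1 : b ∈ π b := (abs_iff b).mpr h
      exact hbc (uniq_pt h1 hba hcb hca hπab.symm)
    have hcℓ : c ∉ ℓ := by
      intro h
      have h1 : c ∈ π c := (abs_iff c).mpr h
      exact hbc.symm (uniq_pt h1 hca hbc' hba hπac.symm)
    have haz : a ≠ z := by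
      intro h
      rw [h, hπz] at hba
      exact hbℓ hba
    have hbz : b ≠ z := by
      intro h
      rw [h, hπz] at hab'
      exact haℓ hab'
    have hcz : c ≠ z := by
      intro h
      rw [h, hπz] at hac'
      exact haℓ hac'
    obtain ⟨hd1, hd2⟩ := hdpt_ax a haz
    obtain ⟨he1, he2⟩ := hdpt_ax b hbz
    obtain ⟨hf1, hf2⟩ := hdpt_ax c hcz
    set d := dpt a
    set e := dpt b
    set f := dpt c
    have hπaℓ : π a ≠ ℓ := hπne haz
    have hπbℓ : π b ≠ ℓ := hπne hbz
    have hπcℓ : π c ≠ ℓ := hπne hcz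
    -- absoluteness of d, e, f
    have hdd : d ∈ π d := (abs_iff d).mpr hd2
    have hee : e ∈ π e := (abs_iff e).mpr he2
    have hff : f ∈ π f := (abs_iff f).mpr hf2
    -- d, e, f are pairwise distinct
    have hde : d ≠ e := by
      intro h
      have h1 : d ∈ π b := h ▸ he1
      have h2 : d = c := uniq_pt hd1 h1 hca hcb hπab
      exact hcℓ (h2 ▸ hd2)
    have hdf : d ≠ f := by
      intro h
      have h1 : d ∈ π c := h ▸ hf1
      have h2 : d = b := uniq_pt hd1 h1 hba hbc' hπac
      exact hbℓ (h2 ▸ hd2)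
    have hef : e ≠ f := by
      intro h
      have h1 : e ∈ π c := h ▸ hf1
      have h2 : e = a := uniq_pt he1 h1 hab' hac' hπbc
      exact haℓ (h2 ▸ he2)
    -- d, e, f differ from a, b, c and z
    have hdz : d ≠ z := fun h => hzℓ (h ▸ hd2)
    have hez : e ≠ z := fun h => hzℓ (h ▸ he2)
    have hfz : f ≠ z := fun h => hzℓ (h ▸ hf2)
    have had : a ≠ d := fun h => haℓ (h ▸ hd2)
    have hae : a ≠ e := fun h => haℓ (h ▸ he2)
    have haf : a ≠ f := fun h => haℓ (h ▸ hf2)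
    have hbd : b ≠ d := fun h => hbℓ (h ▸ hd2)
    have hbe : b ≠ e := fun h => hbℓ (h ▸ he2)
    have hbf : b ≠ f := fun h => hbℓ (h ▸ hf2)
    have hcd : c ≠ d := fun h => hcℓ (h ▸ hd2)
    have hce : c ≠ e := fun h => hcℓ (h ▸ he2)
    have hcf : c ≠ f := fun h => hcℓ (h ▸ hf2)
    have hπdℓ : π d ≠ ℓ := hπne hdz
    have hπeℓ : π e ≠ ℓ := hπne hez
    have hπfℓ : π f ≠ ℓ := hπne hfz
    -- positive incidences involving z
    have hzd : z ∈ π d := (hπ z d).mpr (by rw [hπz]; exact hd2)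
    have hze : z ∈ π e := (hπ z e).mpr (by rw [hπz]; exact he2)
    have hzf : z ∈ π f := (hπ z f).mpr (by rw [hπz]; exact hf2)
    have hdπz : d ∈ π z := by rw [hπz]; exact hd2
    have heπz : e ∈ π z := by rw [hπz]; exact he2
    have hfπz : f ∈ π z := by rw [hπz]; exact hf2
    -- remaining positive incidences by symmetry
    have had' : a ∈ π d := (hπ a d).mpr hd1
    have hbe' : b ∈ π e := (hπ b e).mpr he1
    have hcf' : c ∈ π f := (hπ c f).mpr hf1
    -- negative incidences
    have naa : a ∉ π a := fun h => haℓ ((abs_iff a).mp h)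
    have nbb : b ∉ π b := fun h => hbℓ ((abs_iff b).mp h)
    have ncc : c ∉ π c := fun h => hcℓ ((abs_iff c).mp h)
    have nzz : z ∉ π z := fun h => hzℓ (by rwa [hπz] at h)
    have nea : e ∉ π a := fun h => hde.symm (uniq_pt h he2 hd1 hd2 hπaℓ)
    have nfa : f ∉ π a := fun h => hdf.symm (uniq_pt h hf2 hd1 hd2 hπaℓ)
    have ndb : d ∉ π b := fun h => hde (uniq_pt h hd2 he1 he2 hπbℓ)
    have nfb : f ∉ π b := fun h => hef.symm (uniq_pt h hf2 he1 he2 hπbℓ)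
    have ndc : d ∉ π c := fun h => hdf (uniq_pt h hd2 hf1 hf2 hπcℓ)
    have nec : e ∉ π c := fun h => hef (uniq_pt h he2 hf1 hf2 hπcℓ)
    have nza : z ∉ π a := fun h => haℓ (by rw [← hπz]; exact (hπ a z).mpr h)
    have nzb : z ∉ π b := fun h => hbℓ (by rw [← hπz]; exact (hπ b z).mpr h)
    have nzc : z ∉ π c := fun h => hcℓ (by rw [← hπz]; exact (hπ c z).mpr h)
    have ned : e ∉ π d := fun h => hde.symm (uniq_pt h he2 hdd hd2 hπdℓ)
    have nfd : f ∉ π d := fun h => hdf.symm (uniq_pt h hf2 hdd hd2 hπdℓ)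
    have nfe : f ∉ π e := fun h => hef.symm (uniq_pt h hf2 hee he2 hπeℓ)
    -- transposed negative incidences via the polarity
    have nae : a ∉ π e := fun h => nea ((hπ a e).mp h)
    have naf : a ∉ π f := fun h => nfa ((hπ a f).mp h)
    have nbd : b ∉ π d := fun h => ndb ((hπ b d).mp h)
    have nbf : b ∉ π f := fun h => nfb ((hπ b f).mp h)
    have ncd : c ∉ π d := fun h => ndc ((hπ c d).mp h)
    have nce : c ∉ π e := fun h => nec ((hπ c e).mp h)
    have naz : a ∉ π z := fun h => haℓ (by rwa [hπz] at h)
    have nbz : b ∉ π z := fun h => hbℓ (by rwa [hπz] at h)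
    have ncz : c ∉ π z := fun h => hcℓ (by rwa [hπz] at h)
    have nde : d ∉ π e := fun h => ned ((hπ d e).mp h)
    have ndf : d ∉ π f := fun h => nfd ((hπ d f).mp h)
    have nef' : e ∉ π f := fun h => nfe ((hπ e f).mp h)
    have naz' : z ≠ a := haz.symm
    -- set up the seven-tuple
    have hx_inj : Function.Injective (seven a b c d e f z) := by
      intro i j hij
      fin_cases i <;> fin_cases j <;>
        first
          | rfl
          | exact absurd hij (by assumption)
          | exact absurd hij.symm (by assumption)
    have hinc : ∀ i j, seven a b c d e f z i ∈ π (seven a b c d e f z j) ↔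
        fanoInc i j = true := by
      intro i j
      fin_cases i <;> fin_cases j <;>
        first
          | exact iff_of_true (by assumption) (by decide)
          | exact iff_of_false (by assumption) (by decide)
    have hy_inj : Function.Injective (fun i => π (seven a b c d e f z i)) :=
      fun i j hij => hx_inj (π.injective hij)
    have hfano := isFanoSubplane_mk (seven a b c d e f z)
      (fun i => π (seven a b c d e f z i)) hx_inj hy_inj hinc
    have hqz3 : ∀ q ∈ ({a, b, c} : Finset P), q ≠ z := by
      intro q hq
      rcases Finset.mem_insert.mp hq with rfl | hq
      · exact haz
      rcases Finset.mem_insert.mp hq with rfl | hq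
      · exact hbz
      · rw [Finset.mem_singleton.mp hq]; exact hcz
    have hrange : Set.range (seven a b c d e f z) = Fpts {a, b, c} := by
      ext p
      constructor
      · rintro ⟨i, rfl⟩
        fin_cases i
        · exact Set.mem_union_left _ (Set.mem_union_left _ (Finset.mem_coe.mpr hma))
        · exact Set.mem_union_left _ (Set.mem_union_left _ (Finset.mem_coe.mpr hmb))
        · exact Set.mem_union_left _ (Set.mem_union_left _ (Finset.mem_coe.mpr hmc))
        · exact Set.mem_union_left _
            (Set.mem_union_right _ ⟨a, Finset.mem_coe.mpr hma, rfl⟩)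
        · exact Set.mem_union_left _
            (Set.mem_union_right _ ⟨b, Finset.mem_coe.mpr hmb, rfl⟩)
        · exact Set.mem_union_left _
            (Set.mem_union_right _ ⟨c, Finset.mem_coe.mpr hmc, rfl⟩)
        · exact Set.mem_union_right _ rfl
      · rintro ((h | ⟨q, hq, rfl⟩) | h)
        · rw [Finset.mem_coe] at h
          rcases Finset.mem_insert.mp h with rfl | h
          · exact ⟨0, rfl⟩
          rcases Finset.mem_insert.mp h with rfl | h
          · exact ⟨1, rfl⟩
          · rw [Finset.mem_singleton.mp h]; exact ⟨2, rfl⟩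
        · rw [Finset.mem_coe] at hq
          rcases Finset.mem_insert.mp hq with rfl | hq
          · exact ⟨3, rfl⟩
          rcases Finset.mem_insert.mp hq with rfl | hq
          · exact ⟨4, rfl⟩
          · rw [Finset.mem_singleton.mp hq]; exact ⟨5, rfl⟩
        · exact ⟨6, h.symm⟩
    have hcomp : Set.range (fun i => π (seven a b c d e f z i)) =
        π '' Set.range (seven a b c d e f z) := Set.range_comp π (seven a b c d e f z)
    constructor
    · rw [← hrange, ← hcomp]
      exact hfano
    · ext p
      constructor
      · intro hp
        rw [Finset.mem_coe] at hp
        have hmemF : p ∈ Fpts {a, b, c} :=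
          Set.mem_union_left _ (Set.mem_union_left _ (Finset.mem_coe.mpr hp))
        rcases Finset.mem_insert.mp hp with rfl | hp'
        · exact ⟨hmemF, haℓ, haz⟩
        rcases Finset.mem_insert.mp hp' with rfl | hp''
        · exact ⟨hmemF, hbℓ, hbz⟩
        · obtain rfl := Finset.mem_singleton.mp hp''
          exact ⟨hmemF, hcℓ, hcz⟩
      · rintro ⟨hmem, hpℓ, hpz⟩
        rcases hmem with (h | ⟨q, hq, rfl⟩) | h
        · exact h
        · rw [Finset.mem_coe] at hq
          exact absurd (hdpt_ax q (hqz3 q hq)).2 hpℓ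
        · exact absurd h hpz
  -- counting the non-absolute points other than z
  set P0 : Finset P := Finset.univ.filter (fun p => p ∉ ℓ ∧ p ≠ z) with hP0def
  have hP0card : P0.card = n ^ 2 - 1 := by
    have h1 : (Finset.univ.filter (fun p : P => p ∉ ℓ)).card = n ^ 2 := by
      have h2 : Finset.univ.filter (fun p : P => p ∉ ℓ) = (Finset.univ.filter (· ∈ ℓ))ᶜ := by
        ext p; simp
      rw [h2, Finset.card_compl, card_pts ℓ, cardP]
      omega
    have h3 : P0 = (Finset.univ.filter (fun p : P => p ∉ ℓ)).erase z := by
      ext p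
      simp only [hP0def, Finset.mem_filter, Finset.mem_univ, true_and, Finset.mem_erase]
      tauto
    rw [h3, Finset.card_erase_of_mem (by simp [hzℓ]), h1]
  have hN : ∀ p ∈ P0, (Finset.univ.filter (fun q => q ∈ π p ∧ q ∉ ℓ)).card = n := by
    intro p hp
    rw [hP0def, Finset.mem_filter] at hp
    obtain ⟨-, hpℓ, hpz⟩ := hp
    have hne := hπne hpz
    obtain ⟨w, hw1, hw2⟩ : ∃ w : P, w ∈ π p ∧ w ∈ ℓ :=
      ⟨Configuration.HasPoints.mkPoint hne, Configuration.HasPoints.mkPoint_ax hne⟩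
    have h4 : Finset.univ.filter (fun q => q ∈ π p ∧ q ∉ ℓ)
        = (Finset.univ.filter (· ∈ π p)).erase w := by
      ext q
      simp only [Finset.mem_filter, Finset.mem_univ, true_and, Finset.mem_erase]
      constructor
      · rintro ⟨h5, h6⟩
        exact ⟨fun e => h6 (e ▸ hw2), h5⟩
      · rintro ⟨h5, h6⟩
        exact ⟨h6, fun h7 => h5 (uniq_pt h6 h7 hw1 hw2 hne)⟩
    rw [h4, Finset.card_erase_of_mem (by simp [hw1]), card_pts (π p)]
    omega
  set D : Finset ((_ : P) × P) :=
    P0.sigma (fun p => Finset.univ.filter (fun q => q ∈ π p ∧ q ∉ ℓ)) with hDdef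
  have hDcard : D.card = (n ^ 2 - 1) * n := by
    rw [hDdef, Finset.card_sigma, Finset.sum_congr rfl hN, Finset.sum_const, hP0card,
      smul_eq_mul]
  obtain ⟨tri, htri⟩ : ∃ tri : (Σ _ : P, P) → Finset P,
      ∀ (p q : P) (h : π p ≠ π q),
        tri ⟨p, q⟩ = {p, q, Configuration.HasPoints.mkPoint h} := by
    exact ⟨fun pq => if h : π pq.1 ≠ π pq.2
      then {pq.1, pq.2, Configuration.HasPoints.mkPoint h} else ∅, fun p q h => dif_pos h⟩
  have hDfacts : ∀ pq ∈ D, pq.1 ∈ tri pq ∧ pq.2 ∈ tri pq ∧ pq.1 ≠ pq.2 ∧ tri pq ∈ Tri := by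
    rintro ⟨p, q⟩ hpq
    rw [hDdef, Finset.mem_sigma] at hpq
    obtain ⟨hp, hq⟩ := hpq
    rw [hP0def, Finset.mem_filter] at hp
    obtain ⟨-, hpℓ, hpz⟩ := hp
    rw [Finset.mem_filter] at hq
    obtain ⟨-, hqπ, hqℓ⟩ := hq
    have hpq_ne : p ≠ q := by
      rintro rfl
      exact hpℓ ((abs_iff p).mp hqπ)
    have hππ : π p ≠ π q := fun h => hpq_ne (π.injective h)
    set r : P := Configuration.HasPoints.mkPoint (P := P) hππ with hrdef
    obtain ⟨hr1, hr2⟩ : r ∈ π p ∧ r ∈ π q := Configuration.HasPoints.mkPoint_ax (P := P) hππ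
    have hrp : r ≠ p := fun h => hpℓ ((abs_iff p).mp (h ▸ hr1))
    have hrq : r ≠ q := fun h => hqℓ ((abs_iff q).mp (h ▸ hr2))
    have hpq' : p ∈ π q := (hπ p q).mpr hqπ
    have hpr : p ∈ π r := (hπ p r).mpr hr1
    have hqr : q ∈ π r := (hπ q r).mpr hr2
    have htri' : tri ⟨p, q⟩ = {p, q, r} := htri p q hππ
    have hpm : p ∈ tri ⟨p, q⟩ := by rw [htri']; simp
    have hqm : q ∈ tri ⟨p, q⟩ := by rw [htri']; simp
    refine ⟨hpm, hqm, hpq_ne, ?_⟩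
    rw [hTridef, Finset.mem_filter, htri']
    refine ⟨Finset.mem_univ _, ?_, ?_⟩
    · rw [Finset.card_insert_of_notMem (by simp [hpq_ne, hrp.symm]),
        Finset.card_insert_of_notMem (by simp [hrq.symm]), Finset.card_singleton]
    · intro x hx y hy hxy
      simp only [Finset.mem_insert, Finset.mem_singleton] at hx hy
      rcases hx with rfl | rfl | rfl <;> rcases hy with rfl | rfl | rfl
      · exact absurd rfl hxy
      · exact hpq'
      · exact hpr
      · exact hqπ
      · exact absurd rfl hxy
      · exact hqr
      · exact hr1
      · exact hr2
      · exact absurd rfl hxy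
  have hDle : D.card ≤ 6 * Tri.card := by
    apply Finset.card_le_mul_card_image_of_maps_to (fun pq hpq => (hDfacts pq hpq).2.2.2)
    intro b hb
    have hb3 : b.card = 3 := by
      rw [hTridef, Finset.mem_filter] at hb
      exact hb.2.1
    calc (D.filter (fun pq => tri pq = b)).card
        ≤ b.offDiag.card := by
          apply Finset.card_le_card_of_injOn (fun pq => (pq.1, pq.2))
          · intro pq hpq
            rw [Finset.mem_coe, Finset.mem_filter] at hpq
            obtain ⟨hpqD, hpqb⟩ := hpq
            obtain ⟨h1, h2, h3, -⟩ := hDfacts pq hpqD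
            rw [hpqb] at h1 h2
            exact Finset.mem_offDiag.mpr ⟨h1, h2, h3⟩
          · intro x _ y _ he
            have e1 : x.1 = y.1 := congrArg Prod.fst he
            have e2 : x.2 = y.2 := congrArg Prod.snd he
            exact Sigma.ext e1 (heq_of_eq e2)
      _ = 6 := by rw [Finset.offDiag_card, hb3]
  have hTrile : Tri.card ≤ {x : Set P × Set L | IsFanoSubplane x.1 x.2}.ncard := by
    have hinj : Set.InjOn (fun s => (Fpts s, π '' Fpts s)) ↑Tri := by
      intro s1 hsm t1 htm he
      have h1 := (main s1 (Finset.mem_coe.mp hsm)).2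
      have h2 := (main t1 (Finset.mem_coe.mp htm)).2
      apply Finset.coe_injective
      have h5 : Fpts s1 = Fpts t1 := congrArg Prod.fst he
      rw [h1, h2, h5]
    have h1 : ((fun s => (Fpts s, π '' Fpts s)) '' ↑Tri).ncard = Tri.card := by
      rw [Set.ncard_image_of_injOn hinj, Set.ncard_coe_finset]
    have h2 : ((fun s => (Fpts s, π '' Fpts s)) '' ↑Tri) ⊆
        {x : Set P × Set L | IsFanoSubplane x.1 x.2} := by
      rintro x1 ⟨s1, hs1, rfl⟩
      exact (main s1 (Finset.mem_coe.mp hs1)).1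
    have h3 := Set.ncard_le_ncard h2 (Set.toFinite _)
    omega
  have e1 : (n ^ 2 - 1) * n = n ^ 3 - n := by
    have h6 : n ^ 2 * n = n ^ 3 := (pow_succ n 2).symm
    rw [Nat.sub_mul, one_mul, h6]
  have e2 : n ≤ n ^ 3 := Nat.le_self_pow (by norm_num) n
  have e3 : 1 * n ≤ n ^ 2 * n := Nat.mul_le_mul_right n (Nat.one_le_pow 2 n (by omega))
  have h7 : n ^ 3 - n ≤ 6 * Tri.card := by
    rw [← e1, ← hDcard]
    exact hDle
  omega

/-- Every finite projective plane of even order `n ≥ 2` admitting an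
orthogonal polarity contains at least `(n³ - n)/6 - (n + 1)(n/2 - 1)` Fano subplanes; in
particular there is an absolute constant `c > 0` such that for all sufficiently large even
`n`, every such plane contains at least `c · n³` Fano subplanes. -/
theorem fano_subplane_count_lower_bound :
    (∀ (P L : Type) [Membership P L] [Fintype P] [Fintype L]
        [Configuration.ProjectivePlane P L] (n : ℕ),
        Configuration.ProjectivePlane.order P L = n → Even n → 2 ≤ n →
        ∀ π : P ≃ L, (∀ p q : P, p ∈ π q ↔ q ∈ π p) →
          {x : P | x ∈ π x}.ncard = n + 1 →
          ((n : ℤ) ^ 3 - n) / 6 - (n + 1) * ((n : ℤ) / 2 - 1) ≤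
            ({x : Set P × Set L | IsFanoSubplane x.1 x.2}.ncard : ℤ)) ∧
    ∃ c : ℝ, 0 < c ∧ ∃ N : ℕ,
      ∀ (P L : Type) [Membership P L] [Fintype P] [Fintype L]
        [Configuration.ProjectivePlane P L] (n : ℕ),
        Configuration.ProjectivePlane.order P L = n → Even n → N ≤ n →
        ∀ π : P ≃ L, (∀ p q : P, p ∈ π q ↔ q ∈ π p) →
          {x : P | x ∈ π x}.ncard = n + 1 →
          c * (n : ℝ) ^ 3 ≤ ({x : Set P × Set L | IsFanoSubplane x.1 x.2}.ncard : ℝ) := by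
  constructor
  · intro P L _ _ _ _ n hord hev hn π hπ habs
    have hkey := FanoAux.key P L hord hev hn π hπ habs
    have h1 : ((n : ℤ) ^ 3 - n) ≤
        6 * (({x : Set P × Set L | IsFanoSubplane x.1 x.2}.ncard : ℤ)) := by
      have : ((n : ℤ) ^ 3) ≤
          6 * (({x : Set P × Set L | IsFanoSubplane x.1 x.2}.ncard : ℤ)) + n := by
        exact_mod_cast hkey
      linarith
    have h2 : ((n : ℤ) ^ 3 - n) / 6 ≤
        (({x : Set P × Set L | IsFanoSubplane x.1 x.2}.ncard : ℤ)) := by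
      have h3 := Int.ediv_le_ediv (by norm_num : (0 : ℤ) < 6) h1
      rwa [Int.mul_ediv_cancel_left _ (by norm_num)] at h3
    have h5 : (2 : ℤ) ≤ (n : ℤ) := by exact_mod_cast hn
    have h4 : 0 ≤ ((n : ℤ) + 1) * ((n : ℤ) / 2 - 1) :=
      mul_nonneg (by omega) (by omega)
    linarith
  · refine ⟨1/12, by norm_num, 2, ?_⟩
    intro P L _ _ _ _ n hord hev hn π hπ habs
    have hkey := FanoAux.key P L hord hev hn π hπ habs
    have h1 : ((n : ℝ) ^ 3) ≤
        6 * (({x : Set P × Set L | IsFanoSubplane x.1 x.2}.ncard : ℝ)) + n := by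
      exact_mod_cast hkey
    have h2 : (2 : ℝ) ≤ (n : ℝ) := by exact_mod_cast hn
    have h3 : 2 * (n : ℝ) ≤ (n : ℝ) ^ 3 := by nlinarith [sq_nonneg ((n : ℝ) - 2)]
    linarith
end
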